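/- arXiv:2604.00680 — 4 statements merged into one kernel-verified Lean document; each statement's English description precedes it below -/
import Mathlib

section
/- (Lemma 2 of the paper.) Let A ∈ ℝ^{n×n}, B ∈ ℝ^{n×m}, C ∈ ℝ^{p×n}, K ∈ ℝ^{r×n}. Then there exist nonnegative integers n₁, n₂, n₃ with n₁ + n₂ + n₃ = n and an orthogonal matrix P ∈ ℝ^{n×n} such that PᵀAP = [[A₁, 0, 0],[A₂₁, A₂, 0],[A₃₁, A₃₂, A₃]] (block lower triangular with diagonal blocks of sizes n₁, n₂, n₃) and CP = [C₁, 0, 0], where: (1) the pair (A₁, C₁) with A₁ ∈ ℝ^{n₁×n₁}, C₁ ∈ ℝ^{p×n₁} is observable; (2) every complex eigenvalue of A₂ ∈ ℝ^{n₂×n₂} has negative real part; (3) every complex eigenvalue of A₃ ∈ ℝ^{n₃×n₃} has nonnegative real part. -/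
open Matrix Polynomial

section Helpers

lemma inner_eq_dot {k : ℕ} (x y : EuclideanSpace ℝ (Fin k)) :
    @inner ℝ _ _ x y = (x : Fin k → ℝ) ⬝ᵥ (y : Fin k → ℝ) := by
  simp [PiLp.inner_apply, RCLike.inner_apply, dotProduct, mul_comm]

lemma adapt {k : ℕ} (W : Submodule ℝ (Fin k → ℝ)) :
    ∃ (a b : ℕ) (_ : a + b = k) (P : Matrix (Fin k) (Fin a ⊕ Fin b) ℝ),
      Pᵀ * P = 1 ∧ P * Pᵀ = 1 ∧
      (∀ j, Pᵀ (Sum.inr j) ∈ W) ∧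
      (∀ j, ∀ w ∈ W, Pᵀ (Sum.inl j) ⬝ᵥ w = 0) := by
  let W' : Submodule ℝ (EuclideanSpace ℝ (Fin k)) :=
    W.comap (WithLp.linearEquiv 2 ℝ (Fin k → ℝ)).toLinearMap
  have hab : Module.finrank ℝ W'ᗮ + Module.finrank ℝ W' = k := by
    have h := W'.finrank_add_finrank_orthogonal
    simp only [finrank_euclideanSpace, Fintype.card_fin] at h
    omega
  refine ⟨Module.finrank ℝ W'ᗮ, Module.finrank ℝ W', hab, ?_⟩
  let b₁ := stdOrthonormalBasis ℝ W'ᗮ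
  let b₂ := stdOrthonormalBasis ℝ W'
  set P : Matrix (Fin k) (Fin (Module.finrank ℝ W'ᗮ) ⊕ Fin (Module.finrank ℝ W')) ℝ :=
    fun i s => Sum.elim (fun j => ((b₁ j : EuclideanSpace ℝ (Fin k)) i))
      (fun j => ((b₂ j : EuclideanSpace ℝ (Fin k)) i)) s with hP
  have o1 := orthonormal_iff_ite.mp b₁.orthonormal
  have o2 := orthonormal_iff_ite.mp b₂.orthonormal
  have hcol : ∀ s t, @inner ℝ _ _
      (show EuclideanSpace ℝ (Fin k) from WithLp.toLp 2 (fun i => P i s))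
      (show EuclideanSpace ℝ (Fin k) from WithLp.toLp 2 (fun i => P i t)) = if s = t then (1:ℝ) else 0 := by
    rintro (j | j) (j' | j')
    · show @inner ℝ _ _ ((b₁ j : EuclideanSpace ℝ (Fin k))) ((b₁ j' : EuclideanSpace ℝ (Fin k))) = _
      rw [← Submodule.coe_inner, o1 j j']
      simp [Sum.inl.injEq]
    · show @inner ℝ _ _ ((b₁ j : EuclideanSpace ℝ (Fin k))) ((b₂ j' : EuclideanSpace ℝ (Fin k))) = _
      rw [Submodule.inner_left_of_mem_orthogonal (b₂ j').2 (b₁ j).2]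
      simp
    · show @inner ℝ _ _ ((b₂ j : EuclideanSpace ℝ (Fin k))) ((b₁ j' : EuclideanSpace ℝ (Fin k))) = _
      rw [Submodule.inner_right_of_mem_orthogonal (b₂ j).2 (b₁ j').2]
      simp
    · show @inner ℝ _ _ ((b₂ j : EuclideanSpace ℝ (Fin k))) ((b₂ j' : EuclideanSpace ℝ (Fin k))) = _
      rw [← Submodule.coe_inner, o2 j j']
      simp [Sum.inr.injEq]
  have hPtP : Pᵀ * P = 1 := by
    ext s t
    have h := hcol s t
    rw [inner_eq_dot] at h
    simp only [Matrix.mul_apply, Matrix.transpose_apply, Matrix.one_apply]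
    simpa [dotProduct] using h
  have hPPt : P * Pᵀ = 1 := by
    have e : (Fin (Module.finrank ℝ W'ᗮ) ⊕ Fin (Module.finrank ℝ W')) ≃ Fin k :=
      finSumFinEquiv.trans (finCongr hab)
    have h1 : (P.submatrix id e.symm)ᵀ * (P.submatrix id e.symm) = 1 := by
      rw [show (P.submatrix id e.symm)ᵀ = Pᵀ.submatrix e.symm (Equiv.refl (Fin k)) from rfl]
      rw [show P.submatrix id e.symm = P.submatrix (Equiv.refl (Fin k)) e.symm from rfl]
      rw [Matrix.submatrix_mul_equiv, hPtP, Matrix.submatrix_one_equiv]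
    have h2 := mul_eq_one_comm.mp h1
    calc P * Pᵀ = (P.submatrix id e.symm) * (P.submatrix id e.symm)ᵀ := by
          rw [show (P.submatrix id e.symm)ᵀ = Pᵀ.submatrix e.symm (Equiv.refl (Fin k)) from rfl]
          rw [show P.submatrix id e.symm = P.submatrix (Equiv.refl (Fin k)) e.symm from rfl]
          rw [Matrix.submatrix_mul_equiv]
          rfl
      _ = 1 := h2
  refine ⟨P, hPtP, hPPt, fun j => (b₂ j).2, fun j w hw => ?_⟩
  have h := Submodule.inner_left_of_mem_orthogonal (K := W') (show WithLp.toLp 2 w ∈ W' from hw) (b₁ j).2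
  rw [inner_eq_dot] at h
  exact h

lemma pow_mulVec_eigen {s : ℕ} (M : Matrix (Fin s) (Fin s) ℂ) (v : Fin s → ℂ) (μ : ℂ)
    (h : M.mulVec v = μ • v) (j : ℕ) : (M ^ j).mulVec v = μ ^ j • v := by
  induction j with
  | zero => simp
  | succ j ih =>
    rw [pow_succ, ← Matrix.mulVec_mulVec, h, Matrix.mulVec_smul, ih]
    simp [smul_smul, pow_succ, mul_comm]

lemma aeval_mulVec_eigen {s : ℕ} (M : Matrix (Fin s) (Fin s) ℂ) (v : Fin s → ℂ) (μ : ℂ)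
    (h : M.mulVec v = μ • v) (f : Polynomial ℂ) :
    (aeval M f).mulVec v = f.eval μ • v := by
  induction f using Polynomial.induction_on' with
  | add p q hp hq => rw [map_add, Matrix.add_mulVec, hp, hq, eval_add, add_smul]
  | monomial j c =>
    rw [aeval_monomial, eval_monomial, ← Algebra.smul_def, Matrix.smul_mulVec,
      pow_mulVec_eigen M v μ h j, smul_smul]

lemma spectrum_exists_eigenvector {s : ℕ} (M : Matrix (Fin s) (Fin s) ℂ) (μ : ℂ)
    (h : μ ∈ spectrum ℂ M) : ∃ v, v ≠ 0 ∧ M.mulVec v = μ • v := by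
  rw [spectrum.mem_iff] at h
  have hdet : (algebraMap ℂ (Matrix (Fin s) (Fin s) ℂ) μ - M).det = 0 := by
    by_contra hd
    exact h ((Matrix.isUnit_iff_isUnit_det _).mpr (Ne.isUnit hd))
  obtain ⟨v, hv, hv0⟩ := (Matrix.exists_mulVec_eq_zero_iff).mpr hdet
  refine ⟨v, hv, ?_⟩
  rw [Matrix.sub_mulVec] at hv0
  have h2 : (algebraMap ℂ (Matrix (Fin s) (Fin s) ℂ) μ).mulVec v = μ • v := by
    simp [Algebra.algebraMap_eq_smul_one, Matrix.smul_mulVec]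
  rw [h2, sub_eq_zero] at hv0
  exact hv0.symm

lemma intertwine_aeval {a b : ℕ} (M : Matrix (Fin a) (Fin a) ℝ) (N : Matrix (Fin a) (Fin b) ℝ)
    (A : Matrix (Fin b) (Fin b) ℝ) (h : M * N = N * A) (f : Polynomial ℝ) :
    (aeval M f) * N = N * (aeval A f) := by
  induction f using Polynomial.induction_on' with
  | add p q hp hq => rw [map_add, map_add, Matrix.add_mul, Matrix.mul_add, hp, hq]
  | monomial j c =>
    have hpow : ∀ j : ℕ, M ^ j * N = N * A ^ j := by
      intro j
      induction j with
      | zero => simp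
      | succ j ih =>
        rw [pow_succ, pow_succ, Matrix.mul_assoc, h, ← Matrix.mul_assoc, ih, Matrix.mul_assoc]
    rw [aeval_monomial, aeval_monomial, ← Algebra.smul_def, ← Algebra.smul_def,
      Matrix.smul_mul, hpow j, Matrix.mul_smul]

lemma aeval_map_matrix {s : ℕ} (M : Matrix (Fin s) (Fin s) ℝ) (f : Polynomial ℝ) :
    (aeval M f).map (algebraMap ℝ ℂ) =
      aeval (M.map (algebraMap ℝ ℂ)) (f.map (algebraMap ℝ ℂ)) := by
  have h0 : (aeval M f).map (algebraMap ℝ ℂ) =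
      (algebraMap ℝ ℂ).mapMatrix (aeval M f) := rfl
  rw [h0, aeval_def, aeval_def, Polynomial.hom_eval₂, eval₂_map]
  congr 1
  ext x i j
  by_cases hij : i = j <;> simp [Matrix.algebraMap_matrix_apply, hij]

lemma aeval_transpose {s : ℕ} (M : Matrix (Fin s) (Fin s) ℝ) (f : Polynomial ℝ) :
    aeval Mᵀ f = (aeval M f)ᵀ := by
  induction f using Polynomial.induction_on' with
  | add p q hp hq => rw [map_add, map_add, hp, hq, Matrix.transpose_add]
  | monomial j c =>
    rw [aeval_monomial, aeval_monomial, ← Algebra.smul_def, ← Algebra.smul_def,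
      Matrix.transpose_smul, Matrix.transpose_pow]

lemma charpoly_transpose {s : ℕ} (M : Matrix (Fin s) (Fin s) ℝ) : Mᵀ.charpoly = M.charpoly := by
  rw [Matrix.charpoly, Matrix.charpoly]
  rw [show charmatrix Mᵀ = (charmatrix M)ᵀ by
    ext i j
    by_cases h : i = j
    · subst h; simp
    · rw [Matrix.transpose_apply, charmatrix_apply_ne _ _ _ h,
        charmatrix_apply_ne _ _ _ (Ne.symm h)]
      rfl]
  exact Matrix.det_transpose _

lemma split_charpoly {s : ℕ} (M : Matrix (Fin s) (Fin s) ℝ) :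
    ∃ p q : ℝ[X], p * q = M.charpoly ∧
      (∀ μ : ℂ, (p.map (algebraMap ℝ ℂ)).eval μ = 0 → μ.re < 0) ∧
      (∀ μ : ℂ, (q.map (algebraMap ℝ ℂ)).eval μ = 0 → 0 ≤ μ.re) := by
  set χ : Polynomial ℝ := M.charpoly with hχ
  set χc : Polynomial ℂ := χ.map (algebraMap ℝ ℂ) with hχc
  have hmon : χc.Monic := (M.charpoly_monic).map _
  have hsplit : χc = (χc.roots.map (fun z => X - C z)).prod := by
    conv_lhs => rw [(IsAlgClosed.splits χc).eq_prod_roots_of_monic hmon]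
  have hconjpoly : χc.map (starRingEnd ℂ) = χc := by
    rw [hχc, Polynomial.map_map]
    congr 1
    ext x
    simp
  have hconjroots : χc.roots.map (starRingEnd ℂ) = χc.roots := by
    have h1 := (IsAlgClosed.splits χc).roots_map (starRingEnd ℂ)
    rw [hconjpoly] at h1
    exact h1.symm
  set rts := χc.roots with hrts
  have hfilt : ∀ (P : ℂ → Prop) [DecidablePred P], (∀ z : ℂ, P ((starRingEnd ℂ) z) ↔ P z) →
      (rts.filter P).map (starRingEnd ℂ) = rts.filter P := by
    intro P _ hP
    have h1 := Multiset.filter_map (p := P) (⇑(starRingEnd ℂ)) rts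
    have h2 : Multiset.filter (P ∘ ⇑(starRingEnd ℂ)) rts = Multiset.filter P rts := by
      apply Multiset.filter_congr
      intro z _
      exact hP z
    rw [h2] at h1
    rw [← h1, hconjroots]
  have hprodconj : ∀ (t : Multiset ℂ), t.map (starRingEnd ℂ) = t →
      ((t.map (fun z => X - C z)).prod).map (starRingEnd ℂ) = (t.map (fun z => X - C z)).prod := by
    intro t ht
    rw [show (Polynomial.map (starRingEnd ℂ) ((t.map (fun z => X - C z)).prod))
        = (mapRingHom (starRingEnd ℂ)) ((t.map (fun z => X - C z)).prod) from rfl]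
    rw [← Multiset.prod_hom _ (mapRingHom (starRingEnd ℂ)), Multiset.map_map]
    conv_rhs => rw [← ht, Multiset.map_map]
    congr 1
    apply Multiset.map_congr rfl
    intro z _
    simp
  set neg := rts.filter (fun z => z.re < 0) with hneg
  set pos := rts.filter (fun z => ¬ z.re < 0) with hpos
  set pc : Polynomial ℂ := (neg.map (fun z => X - C z)).prod with hpc
  set qc : Polynomial ℂ := (pos.map (fun z => X - C z)).prod with hqc
  have hprod : pc * qc = χc := by
    rw [hpc, hqc, ← Multiset.prod_add, ← Multiset.map_add, hneg, hpos,
      Multiset.filter_add_not, ← hsplit]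
  have hpcconj : pc.map (starRingEnd ℂ) = pc :=
    hprodconj neg (hfilt _ (fun z => by simp))
  have hqcconj : qc.map (starRingEnd ℂ) = qc :=
    hprodconj pos (hfilt _ (fun z => by simp))
  have hlift : ∀ f : Polynomial ℂ, f.map (starRingEnd ℂ) = f →
      ∃ g : Polynomial ℝ, g.map (algebraMap ℝ ℂ) = f := by
    intro f hf
    have hmem : f ∈ lifts (algebraMap ℝ ℂ) := by
      rw [lifts_iff_coeff_lifts]
      intro k
      have hc := congrArg (fun g => Polynomial.coeff g k) hf
      simp only [coeff_map] at hc
      obtain ⟨x, hx⟩ := Complex.conj_eq_iff_real.mp hc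
      exact ⟨x, by simp [hx]⟩
    exact (mem_lifts f).mp hmem
  obtain ⟨p, hp⟩ := hlift pc hpcconj
  obtain ⟨q, hq⟩ := hlift qc hqcconj
  refine ⟨p, q, ?_, ?_, ?_⟩
  · have hinj : Function.Injective (Polynomial.map (algebraMap ℝ ℂ)) :=
      Polynomial.map_injective _ (algebraMap ℝ ℂ).injective
    apply hinj
    rw [Polynomial.map_mul, hp, hq, hprod, hχc]
  · intro μ hμ
    rw [hp, hpc, eval_multiset_prod, Multiset.map_map, Multiset.prod_eq_zero_iff] at hμ
    obtain ⟨z, hz, hz0⟩ := Multiset.mem_map.mp hμ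
    have hμz : μ = z := by
      have h3 : eval μ (X - C z) = 0 := hz0
      simp [sub_eq_zero] at h3
      exact h3
    subst hμz
    exact (Multiset.mem_filter.mp hz).2
  · intro μ hμ
    rw [hq, hqc, eval_multiset_prod, Multiset.map_map, Multiset.prod_eq_zero_iff] at hμ
    obtain ⟨z, hz, hz0⟩ := Multiset.mem_map.mp hμ
    have hμz : μ = z := by
      have h3 : eval μ (X - C z) = 0 := hz0
      simp [sub_eq_zero] at h3
      exact h3
    subst hμz
    exact not_lt.mp (Multiset.mem_filter.mp hz).2

lemma spectrum_eval_zero_of_annihilating {s : ℕ} (M : Matrix (Fin s) (Fin s) ℝ) (g : ℝ[X])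
    (hg : aeval M g = 0) (μ : ℂ) (hμ : μ ∈ spectrum ℂ (M.map Complex.ofReal)) :
    (g.map (algebraMap ℝ ℂ)).eval μ = 0 := by
  have hMmap : M.map Complex.ofReal = M.map (algebraMap ℝ ℂ) := by
    ext i j; simp
  rw [hMmap] at hμ
  obtain ⟨v, hv, hev⟩ := spectrum_exists_eigenvector _ _ hμ
  have h1 := aeval_mulVec_eigen _ _ _ hev (g.map (algebraMap ℝ ℂ))
  rw [← aeval_map_matrix, hg] at h1
  rw [show (0 : Matrix (Fin s) (Fin s) ℝ).map (algebraMap ℝ ℂ) = 0 by ext i j; simp] at h1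
  rw [Matrix.zero_mulVec] at h1
  rcases smul_eq_zero.mp h1.symm with h | h
  · exact h
  · exact absurd h hv

lemma dot_self_zero {k : ℕ} (x : Fin k → ℝ) (h : x ⬝ᵥ x = 0) : x = 0 := by
  funext i
  have h1 : ∀ j ∈ Finset.univ, (0:ℝ) ≤ x j * x j := fun j _ => mul_self_nonneg _
  have h2 := (Finset.sum_eq_zero_iff_of_nonneg h1).mp h i (Finset.mem_univ i)
  have := mul_self_eq_zero.mp h2
  simpa using this

lemma mulVec_mem_of_cols {n k : ℕ} (M : Matrix (Fin n) (Fin k) ℝ)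
    (W : Submodule ℝ (Fin n → ℝ)) (h : ∀ j, Mᵀ j ∈ W) (y : Fin k → ℝ) : M *ᵥ y ∈ W := by
  have hM : M *ᵥ y = ∑ j, y j • Mᵀ j := by
    funext i
    simp [Matrix.mulVec, dotProduct, Finset.sum_apply, mul_comm]
  rw [hM]
  exact Submodule.sum_mem _ (fun j _ => Submodule.smul_mem _ _ (h j))

lemma sum_mulVec' {α : Type*} {a b : ℕ} (s : Finset α) (f : α → Matrix (Fin a) (Fin b) ℝ)
    (v : Fin b → ℝ) : (∑ i ∈ s, f i) *ᵥ v = ∑ i ∈ s, f i *ᵥ v := by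
  funext j
  simp only [Matrix.mulVec, dotProduct, Finset.sum_apply, Matrix.sum_apply, Finset.sum_mul]
  rw [Finset.sum_comm]

end Helpers

/-- **Lemma 2 of the paper.** For `A ∈ ℝ^{n×n}`, `B ∈ ℝ^{n×m}`,
`C ∈ ℝ^{p×n}`, `K ∈ ℝ^{r×n}` there exist `n₁ + n₂ + n₃ = n` and an orthogonal
matrix `P` such that `PᵀAP` is block lower triangular with diagonal blocks
`A₁, A₂, A₃` of sizes `n₁, n₂, n₃`, `CP = [C₁, 0, 0]`, where `(A₁, C₁)` is
observable, `A₂` has all complex eigenvalues with negative real part, and `A₃`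
has all complex eigenvalues with nonnegative real part. -/
theorem stmt_4 (n m p r : ℕ) (A : Matrix (Fin n) (Fin n) ℝ) (B : Matrix (Fin n) (Fin m) ℝ)
    (C : Matrix (Fin p) (Fin n) ℝ) (K : Matrix (Fin r) (Fin n) ℝ) :
    ∃ (n₁ n₂ n₃ : ℕ) (_ : n₁ + n₂ + n₃ = n)
      (P : Matrix (Fin n) (Fin n₁ ⊕ (Fin n₂ ⊕ Fin n₃)) ℝ),
      Pᵀ * P = 1 ∧ P * Pᵀ = 1 ∧
      ∃ (A₁ : Matrix (Fin n₁) (Fin n₁) ℝ)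
        (A₂₁ : Matrix (Fin n₂) (Fin n₁) ℝ)
        (A₃₁ : Matrix (Fin n₃) (Fin n₁) ℝ)
        (A₂ : Matrix (Fin n₂) (Fin n₂) ℝ)
        (A₃₂ : Matrix (Fin n₃) (Fin n₂) ℝ)
        (A₃ : Matrix (Fin n₃) (Fin n₃) ℝ)
        (C₁ : Matrix (Fin p) (Fin n₁) ℝ),
        Pᵀ * A * P =
          Matrix.fromBlocks A₁ 0 (Matrix.fromRows A₂₁ A₃₁) (Matrix.fromBlocks A₂ 0 A₃₂ A₃) ∧
        C * P = Matrix.fromCols C₁ 0 ∧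
        (∀ v : Fin n₁ → ℝ, (∀ j : ℕ, j < n₁ → (C₁ * A₁ ^ j).mulVec v = 0) → v = 0) ∧
        (∀ μ ∈ spectrum ℂ (A₂.map Complex.ofReal), μ.re < 0) ∧
        (∀ μ ∈ spectrum ℂ (A₃.map Complex.ofReal), 0 ≤ μ.re) := by
  classical
  -- the unobservable subspace
  set N : Submodule ℝ (Fin n → ℝ) :=
    ⨅ (j : ℕ), LinearMap.ker (Matrix.mulVecLin (C * A ^ j)) with hNdef
  have hNmem : ∀ x, x ∈ N ↔ ∀ j : ℕ, (C * A ^ j) *ᵥ x = 0 := by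
    intro x
    simp [hNdef, Submodule.mem_iInf, LinearMap.mem_ker]
  have hNinv : ∀ x ∈ N, A *ᵥ x ∈ N := by
    intro x hx
    rw [hNmem] at hx ⊢
    intro j
    rw [Matrix.mulVec_mulVec, Matrix.mul_assoc, ← pow_succ]
    exact hx (j + 1)
  have hNC : ∀ x ∈ N, C *ᵥ x = 0 := by
    intro x hx
    have := (hNmem x).mp hx 0
    simpa using this
  obtain ⟨n₁, k, h1k, P, hPtP, hPPt, hPr, hPl⟩ := adapt N
  set Ahat := Pᵀ * A * P with hAhat
  have hAhatapply : ∀ s t, Ahat s t = Pᵀ s ⬝ᵥ (A *ᵥ Pᵀ t) := by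
    intro s t
    rw [hAhat, Matrix.mul_assoc]
    simp only [Matrix.mul_apply, Matrix.transpose_apply, Matrix.mulVec, dotProduct]
  have hblock0 : ∀ i j, Ahat (Sum.inl i) (Sum.inr j) = 0 := by
    intro i j
    rw [hAhatapply]
    exact hPl i _ (hNinv _ (hPr j))
  set A₁' : Matrix (Fin n₁) (Fin n₁) ℝ := fun a b => Ahat (Sum.inl a) (Sum.inl b) with hA₁'
  set E : Matrix (Fin k) (Fin n₁) ℝ := fun a b => Ahat (Sum.inr a) (Sum.inl b) with hE
  set D : Matrix (Fin k) (Fin k) ℝ := fun a b => Ahat (Sum.inr a) (Sum.inr b) with hD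
  set C₁ : Matrix (Fin p) (Fin n₁) ℝ := fun i j => (C * P) i (Sum.inl j) with hC₁
  set P₁ : Matrix (Fin n) (Fin n₁) ℝ := P.submatrix id Sum.inl with hP₁
  set P₃ : Matrix (Fin n) (Fin k) ℝ := P.submatrix id Sum.inr with hP₃
  have hAP : A * P = P * Ahat := by
    rw [hAhat, ← Matrix.mul_assoc, ← Matrix.mul_assoc, hPPt, Matrix.one_mul]
  have hAP1 : A * P₁ = P₁ * A₁' + P₃ * E := by
    ext i j
    have h1 : (A * P₁) i j = (P * Ahat) i (Sum.inl j) := by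
      rw [← hAP]
      simp [Matrix.mul_apply, hP₁]
    rw [h1]
    simp only [Matrix.mul_apply, Matrix.add_apply, Fintype.sum_sum_type, hP₁, hP₃,
      Matrix.submatrix_apply, id_eq]
    rfl
  have hAP3 : A * P₃ = P₃ * D := by
    ext i j
    have h1 : (A * P₃) i j = (P * Ahat) i (Sum.inr j) := by
      rw [← hAP]
      simp [Matrix.mul_apply, hP₃]
    rw [h1]
    simp only [Matrix.mul_apply, Fintype.sum_sum_type, hP₃, Matrix.submatrix_apply, id_eq,
      hblock0, mul_zero, Finset.sum_const_zero, zero_add]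
    rfl
  have hP1tP1 : P₁ᵀ * P₁ = 1 := by
    ext a b
    have h1 := congrFun (congrFun hPtP (Sum.inl a)) (Sum.inl b)
    simp only [Matrix.mul_apply, Matrix.transpose_apply, Matrix.one_apply] at h1 ⊢
    simp only [hP₁, Matrix.submatrix_apply, id_eq]
    rw [h1]
    by_cases hab : a = b <;> simp [hab]
  -- observability
  have hobs : ∀ v : Fin n₁ → ℝ, (∀ j : ℕ, j < n₁ → (C₁ * A₁' ^ j).mulVec v = 0) → v = 0 := by
    intro v hv
    -- extend to all powers by Cayley-Hamilton
    have hall : ∀ j : ℕ, (C₁ * A₁' ^ j) *ᵥ v = 0 := by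
      intro j
      have hfm := A₁'.charpoly_monic
      have hdeg : A₁'.charpoly.natDegree = n₁ := by
        simpa using A₁'.charpoly_natDegree_eq_dim
      set rem := (X : ℝ[X]) ^ j %ₘ A₁'.charpoly with hrem
      have hmodeq : A₁' ^ j = aeval A₁' rem := by
        conv_lhs => rw [show A₁' ^ j = aeval A₁' ((X : ℝ[X]) ^ j) by simp]
        conv_lhs => rw [← Polynomial.modByMonic_add_div ((X : ℝ[X]) ^ j) A₁'.charpoly]
        rw [map_add, _root_.map_mul, Matrix.aeval_self_charpoly, Matrix.zero_mul, add_zero]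
      have hremdeg : rem.natDegree < n₁ ∨ rem = 0 := by
        by_cases h0 : rem = 0
        · right; exact h0
        · left
          have := Polynomial.natDegree_lt_natDegree h0
            (Polynomial.degree_modByMonic_lt ((X : ℝ[X]) ^ j) hfm)
          omega
      rw [hmodeq, Polynomial.aeval_eq_sum_range, Matrix.mul_sum, sum_mulVec']
      apply Finset.sum_eq_zero
      intro i hi
      rw [Matrix.mul_smul, Matrix.smul_mulVec]
      rcases hremdeg with hd | hd
      · have hin : i < n₁ := by
          have := Finset.mem_range.mp hi
          omega
        rw [hv i hin, smul_zero]
      · simp [hd]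
    obtain ⟨x, hx⟩ : ∃ x : Fin n → ℝ, x = P₁ *ᵥ v := ⟨_, rfl⟩
    have hCP1 : C * P₁ = C₁ := by
      ext i j
      simp [Matrix.mul_apply, hP₁, hC₁]
    have hxkey : ∀ j : ℕ, ∃ w ∈ N, A ^ j *ᵥ x = P₁ *ᵥ (A₁' ^ j *ᵥ v) + w := by
      intro j
      induction j with
      | zero => exact ⟨0, N.zero_mem, by simp [hx]⟩
      | succ j ih =>
        obtain ⟨w, hw, hwe⟩ := ih
        refine ⟨P₃ *ᵥ (E *ᵥ (A₁' ^ j *ᵥ v)) + A *ᵥ w, ?_, ?_⟩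
        · exact N.add_mem (mulVec_mem_of_cols _ _ (fun j => hPr j) _) (hNinv _ hw)
        · have hmat : A * (P₁ * A₁' ^ j) = P₁ * A₁' ^ (j + 1) + P₃ * (E * A₁' ^ j) := by
            rw [← Matrix.mul_assoc A P₁ (A₁' ^ j), hAP1, Matrix.add_mul,
              Matrix.mul_assoc P₁ A₁' (A₁' ^ j), ← pow_succ', Matrix.mul_assoc P₃ E (A₁' ^ j)]
          have hu : A *ᵥ (P₁ *ᵥ (A₁' ^ j *ᵥ v))
              = P₁ *ᵥ (A₁' ^ (j + 1) *ᵥ v) + P₃ *ᵥ (E *ᵥ (A₁' ^ j *ᵥ v)) := by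
            calc A *ᵥ (P₁ *ᵥ (A₁' ^ j *ᵥ v))
                = A *ᵥ ((P₁ * A₁' ^ j) *ᵥ v) :=
                  congrArg _ (Matrix.mulVec_mulVec v P₁ (A₁' ^ j))
              _ = (A * (P₁ * A₁' ^ j)) *ᵥ v := Matrix.mulVec_mulVec v A (P₁ * A₁' ^ j)
              _ = (P₁ * A₁' ^ (j + 1) + P₃ * (E * A₁' ^ j)) *ᵥ v := by rw [hmat]
              _ = (P₁ * A₁' ^ (j + 1)) *ᵥ v + (P₃ * (E * A₁' ^ j)) *ᵥ v :=
                  Matrix.add_mulVec _ _ _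
              _ = P₁ *ᵥ (A₁' ^ (j + 1) *ᵥ v) + P₃ *ᵥ ((E * A₁' ^ j) *ᵥ v) := by
                  rw [Matrix.mulVec_mulVec v P₁ (A₁' ^ (j + 1)),
                    Matrix.mulVec_mulVec v P₃ (E * A₁' ^ j)]
              _ = P₁ *ᵥ (A₁' ^ (j + 1) *ᵥ v) + P₃ *ᵥ (E *ᵥ (A₁' ^ j *ᵥ v)) := by
                  rw [Matrix.mulVec_mulVec v E (A₁' ^ j)]
          calc A ^ (j + 1) *ᵥ x = A *ᵥ (A ^ j *ᵥ x) := by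
                rw [Matrix.mulVec_mulVec x A (A ^ j), ← pow_succ']
            _ = A *ᵥ (P₁ *ᵥ (A₁' ^ j *ᵥ v)) + A *ᵥ w := by rw [hwe, Matrix.mulVec_add]
            _ = _ := by rw [hu]; abel
    have hxN : x ∈ N := by
      rw [hNmem]
      intro j
      obtain ⟨w, hw, hwe⟩ := hxkey j
      rw [show (C * A ^ j) *ᵥ x = C *ᵥ (A ^ j *ᵥ x) from (Matrix.mulVec_mulVec x C (A ^ j)).symm,
        hwe, Matrix.mulVec_add, hNC w hw, add_zero, Matrix.mulVec_mulVec, hCP1,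
        Matrix.mulVec_mulVec, hall j]
    have hxperp : x ᵥ* P₁ = 0 := by
      funext j
      have h1 := hPl j x hxN
      simp only [Matrix.vecMul, dotProduct, hP₁, Matrix.submatrix_apply, id_eq,
        Pi.zero_apply] at h1 ⊢
      rw [← h1]
      exact Finset.sum_congr rfl (fun i _ => mul_comm _ _)
    have hx0 : x = 0 := by
      apply dot_self_zero
      calc x ⬝ᵥ x = x ⬝ᵥ (P₁ *ᵥ v) := by rw [← hx]
        _ = (x ᵥ* P₁) ⬝ᵥ v := Matrix.dotProduct_mulVec x P₁ v
        _ = 0 := by rw [hxperp, zero_dotProduct]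
    have : v = P₁ᵀ *ᵥ x := by
      rw [hx, Matrix.mulVec_mulVec, hP1tP1, Matrix.one_mulVec]
    rw [this, hx0, Matrix.mulVec_zero]
  -- split D by stability
  obtain ⟨pp, qq, hpq, hproot, hqroot⟩ := split_charpoly D
  set S : Submodule ℝ (Fin k → ℝ) := LinearMap.ker (Matrix.mulVecLin (aeval D qq)) with hSdef
  have hSmem : ∀ x, x ∈ S ↔ (aeval D qq) *ᵥ x = 0 := by
    intro x
    simp [hSdef, LinearMap.mem_ker]
  have hSinv : ∀ x ∈ S, D *ᵥ x ∈ S := by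
    intro x hx
    rw [hSmem] at hx ⊢
    rw [Matrix.mulVec_mulVec, intertwine_aeval D D D rfl qq, ← Matrix.mulVec_mulVec, hx,
      Matrix.mulVec_zero]
  obtain ⟨n₂, n₃, h23, Q, hQtQ, hQQt, hQr, hQl⟩ := adapt S
  set Dhat := Qᵀ * D * Q with hDhat
  have hDhatapply : ∀ s t, Dhat s t = Qᵀ s ⬝ᵥ (D *ᵥ Qᵀ t) := by
    intro s t
    rw [hDhat, Matrix.mul_assoc]
    simp only [Matrix.mul_apply, Matrix.transpose_apply, Matrix.mulVec, dotProduct]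
  have hDblock0 : ∀ i j, Dhat (Sum.inl i) (Sum.inr j) = 0 := by
    intro i j
    rw [hDhatapply]
    exact hQl i _ (hSinv _ (hQr j))
  set A₂ : Matrix (Fin n₂) (Fin n₂) ℝ := fun a b => Dhat (Sum.inl a) (Sum.inl b) with hA₂
  set A₃ : Matrix (Fin n₃) (Fin n₃) ℝ := fun a b => Dhat (Sum.inr a) (Sum.inr b) with hA₃
  set A₃₂ : Matrix (Fin n₃) (Fin n₂) ℝ := fun a b => Dhat (Sum.inr a) (Sum.inl b) with hA₃₂
  set Q₁ : Matrix (Fin k) (Fin n₂) ℝ := Q.submatrix id Sum.inl with hQ₁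
  set Q₃ : Matrix (Fin k) (Fin n₃) ℝ := Q.submatrix id Sum.inr with hQ₃
  have hDQ : D * Q = Q * Dhat := by
    rw [hDhat, ← Matrix.mul_assoc, ← Matrix.mul_assoc, hQQt, Matrix.one_mul]
  have hDQ3 : D * Q₃ = Q₃ * A₃ := by
    ext i j
    have h1 : (D * Q₃) i j = (Q * Dhat) i (Sum.inr j) := by
      rw [← hDQ]
      simp [Matrix.mul_apply, hQ₃]
    rw [h1]
    simp only [Matrix.mul_apply, Fintype.sum_sum_type, hQ₃, Matrix.submatrix_apply, id_eq,
      hDblock0, mul_zero, Finset.sum_const_zero, zero_add]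
    rfl
  have hQ3tQ3 : Q₃ᵀ * Q₃ = 1 := by
    ext a b
    have h1 := congrFun (congrFun hQtQ (Sum.inr a)) (Sum.inr b)
    simp only [Matrix.mul_apply, Matrix.transpose_apply, Matrix.one_apply] at h1 ⊢
    simp only [hQ₃, Matrix.submatrix_apply, id_eq]
    rw [h1]
    by_cases hab : a = b <;> simp [hab]
  have hQ1tQ1 : Q₁ᵀ * Q₁ = 1 := by
    ext a b
    have h1 := congrFun (congrFun hQtQ (Sum.inl a)) (Sum.inl b)
    simp only [Matrix.mul_apply, Matrix.transpose_apply, Matrix.one_apply] at h1 ⊢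
    simp only [hQ₁, Matrix.submatrix_apply, id_eq]
    rw [h1]
    by_cases hab : a = b <;> simp [hab]
  -- q(A₃) = 0
  have hqA₃ : aeval A₃ qq = 0 := by
    have h1 := intertwine_aeval D Q₃ A₃ hDQ3 qq
    have h2 : (aeval D qq) * Q₃ = 0 := by
      ext i j
      rw [Matrix.mul_apply]
      have h3 : (aeval D qq) *ᵥ (Q₃ᵀ j) = 0 := (hSmem _).mp (hQr j)
      have h4 := congrFun h3 i
      simpa [Matrix.mulVec, dotProduct, hQ₃] using h4
    rw [h2] at h1
    have h5 := congrArg (fun M => Q₃ᵀ * M) h1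
    simpa [← Matrix.mul_assoc, hQ3tQ3] using h5.symm
  -- p(A₂) = 0
  have hDtQ1 : Dᵀ * Q₁ = Q₁ * A₂ᵀ := by
    have hsym : Qᵀ * Dᵀ * Q = Dhatᵀ := by
      rw [hDhat, Matrix.transpose_mul, Matrix.transpose_mul, Matrix.transpose_transpose,
        Matrix.mul_assoc]
    have hDtQ : Dᵀ * Q = Q * Dhatᵀ := by
      rw [← hsym, ← Matrix.mul_assoc, ← Matrix.mul_assoc, hQQt, Matrix.one_mul]
    ext i j
    have h1 : (Dᵀ * Q₁) i j = (Q * Dhatᵀ) i (Sum.inl j) := by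
      rw [← hDtQ]
      simp [Matrix.mul_apply, hQ₁]
    rw [h1]
    simp only [Matrix.mul_apply, Fintype.sum_sum_type, Matrix.transpose_apply, hDblock0,
      mul_zero, Finset.sum_const_zero, add_zero, hQ₁, Matrix.submatrix_apply, id_eq]
    rfl
  have hpDt : ∀ u : Fin k → ℝ, (∀ w ∈ S, u ⬝ᵥ w = 0) → (aeval Dᵀ pp) *ᵥ u = 0 := by
    intro u hu
    have hkey : ∀ y : Fin k → ℝ, ((aeval Dᵀ pp) *ᵥ u) ⬝ᵥ y = 0 := by
      intro y
      have hyS : (aeval D pp) *ᵥ y ∈ S := by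
        rw [hSmem, Matrix.mulVec_mulVec, ← _root_.map_mul, mul_comm qq pp, hpq,
          Matrix.aeval_self_charpoly, Matrix.zero_mulVec]
      rw [aeval_transpose, Matrix.mulVec_transpose, ← Matrix.dotProduct_mulVec]
      exact hu _ hyS
    exact dot_self_zero _ (hkey _)
  have hpA₂ : aeval A₂ pp = 0 := by
    have h1 := intertwine_aeval Dᵀ Q₁ A₂ᵀ hDtQ1 pp
    have h2 : (aeval Dᵀ pp) * Q₁ = 0 := by
      ext i j
      rw [Matrix.mul_apply]
      have h3 : (aeval Dᵀ pp) *ᵥ (Q₁ᵀ j) = 0 := hpDt _ (fun w hw => hQl j w hw)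
      have h4 := congrFun h3 i
      simpa [Matrix.mulVec, dotProduct, hQ₁] using h4
    rw [h2] at h1
    have h5 := congrArg (fun M => Q₁ᵀ * M) h1
    simp only [← Matrix.mul_assoc, hQ1tQ1, Matrix.one_mul, Matrix.mul_zero] at h5
    have h6 : aeval A₂ᵀ pp = 0 := h5.symm
    rw [aeval_transpose] at h6
    have := congrArg Matrix.transpose h6
    simpa using this
  -- assemble
  set R : Matrix (Fin n₁ ⊕ Fin k) (Fin n₁ ⊕ (Fin n₂ ⊕ Fin n₃)) ℝ :=
    Matrix.fromBlocks (1 : Matrix (Fin n₁) (Fin n₁) ℝ) 0 0 Q with hR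
  set Ptot := P * R with hPtot
  have hRtR : Rᵀ * R = 1 := by
    rw [hR, Matrix.fromBlocks_transpose, Matrix.fromBlocks_multiply]
    simp [hQtQ, Matrix.fromBlocks_one]
  have hRRt : R * Rᵀ = 1 := by
    rw [hR, Matrix.fromBlocks_transpose, Matrix.fromBlocks_multiply]
    simp [hQQt, Matrix.fromBlocks_one]
  have hPtotT : Ptotᵀ * Ptot = 1 := by
    rw [hPtot, Matrix.transpose_mul, Matrix.mul_assoc, ← Matrix.mul_assoc Pᵀ, hPtP,
      Matrix.one_mul, hRtR]
  have hPtotO : Ptot * Ptotᵀ = 1 := by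
    rw [hPtot, Matrix.transpose_mul, Matrix.mul_assoc, ← Matrix.mul_assoc R, hRRt,
      Matrix.one_mul, hPPt]
  refine ⟨n₁, n₂, n₃, by omega, Ptot, hPtotT, hPtotO,
    A₁', fun a b => (Qᵀ * E) (Sum.inl a) b, fun a b => (Qᵀ * E) (Sum.inr a) b,
    A₂, A₃₂, A₃, C₁, ?_, ?_, hobs, ?_, ?_⟩
  · -- block structure
    have hAhatblocks : Ahat = Matrix.fromBlocks A₁' 0 E D := by
      ext s t
      rcases s with s | s <;> rcases t with t | t <;>
        simp [Matrix.fromBlocks, hA₁', hE, hD, hblock0]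
    have hDhatblocks : Qᵀ * D * Q = Matrix.fromBlocks A₂ 0 A₃₂ A₃ := by
      rw [← hDhat]
      ext s t
      rcases s with s | s <;> rcases t with t | t <;>
        simp [Matrix.fromBlocks, hA₂, hA₃, hA₃₂, hDblock0]
    have h1 : Ptotᵀ * A * Ptot = Rᵀ * Ahat * R := by
      rw [hPtot, Matrix.transpose_mul, hAhat]
      simp only [Matrix.mul_assoc]
    rw [h1, hAhatblocks, hR, Matrix.fromBlocks_transpose, Matrix.fromBlocks_multiply,
      Matrix.fromBlocks_multiply]
    simp only [Matrix.transpose_one, Matrix.transpose_zero, Matrix.one_mul, Matrix.mul_one,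
      Matrix.zero_mul, Matrix.mul_zero, add_zero, zero_add, Matrix.mul_assoc]
    rw [← Matrix.mul_assoc Qᵀ D Q, hDhatblocks]
    ext s t
    rcases s with s | s
    · rcases t with t | t <;> rfl
    · rcases t with t | t
      · rcases s with s | s <;> rfl
      · rfl
  · -- C * Ptot
    have hCP : C * P = Matrix.fromCols C₁ 0 := by
      ext i t
      rcases t with t | t
      · simp [Matrix.fromCols, hC₁]
      · simp only [Matrix.fromCols]
        have h3 : C *ᵥ (Pᵀ (Sum.inr t)) = 0 := hNC _ (hPr t)
        have h4 := congrFun h3 i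
        simpa [Matrix.mul_apply, Matrix.mulVec, dotProduct] using h4
    rw [hPtot, ← Matrix.mul_assoc, hCP, hR, Matrix.fromCols_mul_fromBlocks]
    simp
  · -- spectrum of A₂
    intro μ hμ
    exact hproot μ (spectrum_eval_zero_of_annihilating A₂ pp hpA₂ μ hμ)
  · -- spectrum of A₃
    intro μ hμ
    exact hqroot μ (spectrum_eval_zero_of_annihilating A₃ qq hqA₃ μ hμ)
end

section
/- (Theorem 1, equivalence of (1) and (2).) Let A ∈ ℝ^{n×n}, C ∈ ℝ^{p×n}, K ∈ ℝ^{r×n}. Then the pair (A, C) is partially detectable with respect to K if and only if for every λ ∈ ℂ with Re λ ≥ 0, the rank of the complex matrix obtained by stacking D_{[A,C],n,λ} on top of K equals the rank of D_{[A,C],n,λ} (equivalently: every v ∈ ℂⁿ with C(λI−A)^j v = 0 for all j = 0,…,n−1 and (λI−A)^n v = 0 satisfies Kv = 0). -/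
open Matrix NormedSpace Filter Module

attribute [local instance] Matrix.linftyOpNormedAddCommGroup Matrix.linftyOpNormedSpace
  Matrix.linftyOpNormedRing Matrix.linftyOpNormedAlgebra

noncomputable section AuxStmt5

variable {n m k r : ℕ}



lemma rank_add_ker {n : ℕ} {m : Type*} [Fintype m] (M : Matrix m (Fin n) ℂ) :
    M.rank + Module.finrank ℂ (LinearMap.ker M.mulVecLin) = n := by
  rw [Matrix.rank]
  have := LinearMap.finrank_range_add_finrank_ker M.mulVecLin
  simpa using this

lemma rank_fromRows_eq_iff {n : ℕ} {m r : Type*} [Fintype m] [Fintype r]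
    (D : Matrix m (Fin n) ℂ) (K : Matrix r (Fin n) ℂ) :
    (Matrix.fromRows D K).rank = D.rank ↔
      ∀ v : Fin n → ℂ, D.mulVec v = 0 → K.mulVec v = 0 := by
  have hker : LinearMap.ker (Matrix.fromRows D K).mulVecLin
      = LinearMap.ker D.mulVecLin ⊓ LinearMap.ker K.mulVecLin := by
    ext v
    simp only [LinearMap.mem_ker, Matrix.mulVecLin_apply, Submodule.mem_inf,
      Matrix.fromRows_mulVec]
    constructor
    · intro h
      constructor
      · funext i; exact congrFun h (Sum.inl i)
      · funext i; exact congrFun h (Sum.inr i)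
    · rintro ⟨h1, h2⟩
      funext i; cases i with
      | inl i => simpa using congrFun h1 i
      | inr i => simpa using congrFun h2 i
  constructor
  · intro h v hv
    have h1 := rank_add_ker (Matrix.fromRows D K)
    have h2 := rank_add_ker D
    rw [h] at h1
    have hfr : Module.finrank ℂ (LinearMap.ker (Matrix.fromRows D K).mulVecLin)
        = Module.finrank ℂ (LinearMap.ker D.mulVecLin) := by omega
    have hle : LinearMap.ker (Matrix.fromRows D K).mulVecLin ≤ LinearMap.ker D.mulVecLin := by
      rw [hker]; exact inf_le_left
    have heq := Submodule.eq_of_le_of_finrank_eq hle hfr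
    have hv' : v ∈ LinearMap.ker (Matrix.fromRows D K).mulVecLin := by
      rw [heq]; exact hv
    rw [hker] at hv'
    exact hv'.2
  · intro h
    have heq : LinearMap.ker (Matrix.fromRows D K).mulVecLin = LinearMap.ker D.mulVecLin := by
      rw [hker]
      exact inf_eq_left.mpr (fun v hv => h v hv)
    have h1 := rank_add_ker (Matrix.fromRows D K)
    have h2 := rank_add_ker D
    rw [heq] at h1
    omega



/-- The stacked matrix `D_{[A,C],k,λ}`, obtained by vertically stacking the blocks
`C, C(λI−A), C(λI−A)², …, C(λI−A)^{k−1}` and `(λI−A)^k`, with real matrices coerced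
entrywise into `ℂ`. Rows of the block `C(λI−A)^j` are indexed by `(j, row of C)`. -/
noncomputable def Dstack {n : ℕ} {p : Type*} (k : ℕ) (A : Matrix (Fin n) (Fin n) ℝ)
    (C : Matrix p (Fin n) ℝ) (lam : ℂ) : Matrix ((Fin k × p) ⊕ Fin n) (Fin n) ℂ :=
  Matrix.fromRows
    (Matrix.of fun ki j =>
      ((C.map Complex.ofReal) *
        (lam • (1 : Matrix (Fin n) (Fin n) ℂ) - A.map Complex.ofReal) ^ (ki.1 : ℕ)) ki.2 j)
    ((lam • (1 : Matrix (Fin n) (Fin n) ℂ) - A.map Complex.ofReal) ^ k)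

lemma dstack_mulVec_eq_zero_iff {n p : ℕ} (A : Matrix (Fin n) (Fin n) ℝ)
    (C : Matrix (Fin p) (Fin n) ℝ) (lam : ℂ) (v : Fin n → ℂ) :
    (Dstack n A C lam).mulVec v = 0 ↔
      ((∀ j : ℕ, j < n →
          ((C.map Complex.ofReal) *
            (lam • (1 : Matrix (Fin n) (Fin n) ℂ) - A.map Complex.ofReal) ^ j).mulVec v = 0)
       ∧ ((lam • (1 : Matrix (Fin n) (Fin n) ℂ) - A.map Complex.ofReal) ^ n).mulVec v = 0) := by
  rw [Dstack, Matrix.fromRows_mulVec]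
  constructor
  · intro h
    constructor
    · intro j hj
      funext i
      have := congrFun h (Sum.inl (⟨j, hj⟩, i))
      simpa [Matrix.mulVec, dotProduct] using this
    · funext i
      have := congrFun h (Sum.inr i)
      simpa using this
  · rintro ⟨h1, h2⟩
    funext i
    cases i with
    | inl ji =>
      have := congrFun (h1 ji.1 ji.1.isLt) ji.2
      simpa [Matrix.mulVec, dotProduct] using this
    | inr i => simpa using congrFun h2 i


noncomputable def mulVecCLM (v : Fin n → ℂ) :
    Matrix (Fin n) (Fin n) ℂ →L[ℝ] (Fin n → ℂ) :=
  LinearMap.toContinuousLinearMap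
    { toFun := fun X => X.mulVec v
      map_add' := fun X Y => Matrix.add_mulVec X Y v
      map_smul' := fun c X => Matrix.smul_mulVec c X v }

@[simp] lemma mulVecCLM_apply (v : Fin n → ℂ) (X : Matrix (Fin n) (Fin n) ℂ) :
    mulVecCLM v X = X.mulVec v := rfl

noncomputable def entryCLM (i : Fin m) (j : Fin k) :
    Matrix (Fin m) (Fin k) ℂ →L[ℝ] ℂ :=
  LinearMap.toContinuousLinearMap
    { toFun := fun X => X i j
      map_add' := fun X Y => rfl
      map_smul' := fun c X => rfl }

@[simp] lemma entryCLM_apply (i : Fin m) (j : Fin k) (X : Matrix (Fin m) (Fin k) ℂ) :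
    entryCLM i j X = X i j := rfl

/-- Product rule for `mulVec`. -/
lemma HasDerivAt.matrix_mulVec {F : ℝ → Matrix (Fin m) (Fin k) ℂ} {g : ℝ → Fin k → ℂ}
    {F' : Matrix (Fin m) (Fin k) ℂ} {g' : Fin k → ℂ} {t : ℝ}
    (hF : HasDerivAt F F' t) (hg : HasDerivAt g g' t) :
    HasDerivAt (fun s => (F s).mulVec (g s)) (F'.mulVec (g t) + (F t).mulVec g') t := by
  rw [hasDerivAt_pi]
  intro i
  have : ∀ s, (F s).mulVec (g s) i = ∑ j, F s i j * g s j := by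
    intro s; rfl
  simp only [this]
  have hsum : HasDerivAt (fun s => ∑ j, F s i j * g s j)
      (∑ j, (F' i j * g t j + F t i j * g' j)) t := by
    apply HasDerivAt.fun_sum
    intro j _
    have hFij : HasDerivAt (fun s => F s i j) (F' i j) t := by
      have := (entryCLM i j).hasFDerivAt.comp_hasDerivAt t hF
      exact this
    have hgj : HasDerivAt (fun s => g s j) (g' j) t := by
      have := hasDerivAt_pi.mp hg j
      exact this
    exact hFij.mul hgj
  convert hsum using 1
  · rfl
  rw [Finset.sum_add_distrib]
  rfl

lemma hasDerivAt_expM (A : Matrix (Fin n) (Fin n) ℂ) (t : ℝ) :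
    HasDerivAt (fun s : ℝ => exp (s • A)) (exp (t • A) * A) t :=
  hasDerivAt_exp_smul_const (𝕂 := ℝ) A t

lemma hasDerivAt_expM_neg (A : Matrix (Fin n) (Fin n) ℂ) (t : ℝ) :
    HasDerivAt (fun s : ℝ => exp ((-s) • A)) (-(exp ((-t) • A) * A)) t := by
  have h1 := hasDerivAt_expM A (-t)
  have h2 : HasDerivAt (fun s : ℝ => -s) (-1 : ℝ) t := (hasDerivAt_neg t)
  have := h1.scomp t h2
  have h3 : HasDerivAt (fun s : ℝ => exp ((-s) • A)) ((-1 : ℝ) • (exp ((-t) • A) * A)) t := this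
  simpa using h3

lemma continuous_expM (A : Matrix (Fin n) (Fin n) ℂ) :
    Continuous fun s : ℝ => exp (s • A) :=
  (Differentiable.continuous (fun t => (hasDerivAt_expM A t).differentiableAt))

lemma continuous_mulVec_comp {F : ℝ → Matrix (Fin m) (Fin k) ℂ} {g : ℝ → Fin k → ℂ}
    (hF : Continuous F) (hg : Continuous g) :
    Continuous fun t => (F t).mulVec (g t) := by
  apply continuous_pi
  intro i
  have : (fun t => (F t).mulVec (g t) i) = fun t => ∑ j, F t i j * g t j := rfl
  rw [this]
  apply continuous_finset_sum
  intro j _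
  exact ((entryCLM i j).continuous.comp hF).mul ((continuous_apply j).comp hg)

lemma exp_mul_exp_neg (A : Matrix (Fin n) (Fin n) ℂ) (t : ℝ) :
    exp (t • A) * exp ((-t) • A) = 1 := by
  have hcomm : Commute (t • A) ((-t) • A) :=
    ((Commute.refl A).smul_right (-t)).smul_left t
  erw [← exp_add_of_commute hcomm]
  have : t • A + (-t) • A = 0 := by module
  rw [this, exp_zero]

lemma solution_eq_exp (A : Matrix (Fin n) (Fin n) ℂ) (z : ℝ → Fin n → ℂ)
    (hz : Continuous z)
    (hd : ∀ t : ℝ, 0 ≤ t → HasDerivAt z (A.mulVec (z t)) t) :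
    ∀ t : ℝ, 0 ≤ t → z t = (exp (t • A)).mulVec (z 0) := by
  set y : ℝ → Fin n → ℂ := fun t => (exp ((-t) • A)).mulVec (z t) with hy
  have hyd : ∀ t : ℝ, 0 ≤ t → HasDerivAt y 0 t := by
    intro t ht
    have h := (hasDerivAt_expM_neg A t).matrix_mulVec (hd t ht)
    convert h using 1
    rw [Matrix.neg_mulVec, Matrix.mulVec_mulVec]
    abel
  have hycont : Continuous y :=
    continuous_mulVec_comp ((continuous_expM A).comp continuous_neg) hz
  intro T hT
  have hconst := constant_of_has_deriv_right_zero (f := y) (a := 0) (b := T)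
    (hycont.continuousOn)
    (fun s hs => (hyd s hs.1).hasDerivWithinAt)
  have hyT : y T = y 0 := hconst T ⟨hT, le_refl T⟩
  have hy0 : y 0 = z 0 := by
    simp only [hy, neg_zero, zero_smul, exp_zero, Matrix.one_mulVec]
  have : (exp (T • A)).mulVec (y T) = z T := by
    rw [hy]
    rw [Matrix.mulVec_mulVec, exp_mul_exp_neg, Matrix.one_mulVec]
  rw [← this, hyT, hy0]

noncomputable def matCLM (M : Matrix (Fin m) (Fin k) ℂ) :
    (Fin k → ℂ) →L[ℝ] (Fin m → ℂ) :=
  LinearMap.toContinuousLinearMap (M.mulVecLin.restrictScalars ℝ)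

@[simp] lemma matCLM_apply (M : Matrix (Fin m) (Fin k) ℂ) (v : Fin k → ℂ) :
    matCLM M v = M.mulVec v := rfl

lemma hasDerivAt_exp_mulVec (A : Matrix (Fin n) (Fin n) ℂ) (z0 : Fin n → ℂ) (t : ℝ) :
    HasDerivAt (fun s : ℝ => (exp (s • A)).mulVec z0)
      (A.mulVec ((exp (t • A)).mulVec z0)) t := by
  have h := (mulVecCLM z0).hasFDerivAt.comp_hasDerivAt t (hasDerivAt_expM A t)
  have hc : Commute (exp (t • A)) A := (((Commute.refl A).smul_left t).exp_left)
  have : (exp (t • A) * A).mulVec z0 = A.mulVec ((exp (t • A)).mulVec z0) := by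
    rw [Matrix.mulVec_mulVec, ← hc.eq]
  rw [← this]
  exact h

lemma obs_iterate {q : ℕ} (A : Matrix (Fin n) (Fin n) ℂ) (M : Matrix (Fin q) (Fin n) ℂ)
    (z0 : Fin n → ℂ)
    (h : ∀ t : ℝ, 0 ≤ t → M.mulVec ((exp (t • A)).mulVec z0) = 0) :
    ∀ j : ℕ, ∀ t : ℝ, 0 ≤ t → (M * A ^ j).mulVec ((exp (t • A)).mulVec z0) = 0 := by
  intro j
  induction j with
  | zero => simpa using h
  | succ k ih =>
    -- function and its derivative
    set w : ℝ → Fin n → ℂ := fun t => (exp (t • A)).mulVec z0 with hw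
    have hder : ∀ t : ℝ, HasDerivAt (fun s => (M * A ^ k).mulVec (w s))
        ((M * A ^ (k + 1)).mulVec (w t)) t := by
      intro t
      have h1 := (matCLM (M * A ^ k)).hasFDerivAt.comp_hasDerivAt t
        (hasDerivAt_exp_mulVec A z0 t)
      have h2 : (M * A ^ k).mulVec (A.mulVec (w t)) = (M * A ^ (k + 1)).mulVec (w t) := by
        rw [Matrix.mulVec_mulVec, Matrix.mul_assoc, ← pow_succ]
      rw [← h2]
      exact h1
    have hpos : ∀ t : ℝ, 0 < t → (M * A ^ (k + 1)).mulVec (w t) = 0 := by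
      intro t ht
      have heq : (fun s => (M * A ^ k).mulVec (w s)) =ᶠ[nhds t] (fun _ => 0) := by
        have : Set.Ioi (0:ℝ) ∈ nhds t := Ioi_mem_nhds ht
        filter_upwards [this] with s hs
        exact ih s (le_of_lt hs)
      have h0 : HasDerivAt (fun _ : ℝ => (0 : Fin q → ℂ)) ((M * A ^ (k+1)).mulVec (w t)) t :=
        (hder t).congr_of_eventuallyEq heq.symm
      have h1 : HasDerivAt (fun _ : ℝ => (0 : Fin q → ℂ)) 0 t := hasDerivAt_const t 0
      exact (h0.unique h1)
    intro t ht
    rcases eq_or_lt_of_le ht with h0 | hpos'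
    · -- t = 0 : continuity
      have hcont : Continuous fun s : ℝ => (M * A ^ (k + 1)).mulVec (w s) :=
        continuous_mulVec_comp continuous_const
          (continuous_mulVec_comp (continuous_expM A) continuous_const)
      have ht0 : Filter.Tendsto (fun s : ℝ => (M * A ^ (k + 1)).mulVec (w s))
          (nhdsWithin 0 (Set.Ioi 0)) (nhds ((M * A ^ (k + 1)).mulVec (w 0))) :=
        (hcont.tendsto 0).mono_left nhdsWithin_le_nhds
      have ht1 : Filter.Tendsto (fun s : ℝ => (M * A ^ (k + 1)).mulVec (w s))
          (nhdsWithin 0 (Set.Ioi 0)) (nhds 0) := by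
        apply Filter.Tendsto.congr' _ tendsto_const_nhds
        filter_upwards [self_mem_nhdsWithin] with s hs
        exact (hpos s hs).symm
      rw [← h0]
      exact tendsto_nhds_unique ht0 ht1
    · exact hpos t hpos'


lemma exp_mulVec_nilpotent (X : Matrix (Fin n) (Fin n) ℂ) (v : Fin n → ℂ) (m : ℕ)
    (hX : (X ^ m).mulVec v = 0) :
    (exp X).mulVec v
      = ∑ j ∈ Finset.range m, ((j.factorial : ℝ)⁻¹ : ℝ) • (X ^ j).mulVec v := by
  have hsum : Summable fun j : ℕ => ((j.factorial : ℝ)⁻¹ : ℝ) • X ^ j :=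
    expSeries_summable' (𝕂 := ℝ) X
  have h1 : (exp X).mulVec v = mulVecCLM v (∑' j : ℕ, ((j.factorial : ℝ)⁻¹ : ℝ) • X ^ j) := by
    rw [exp_eq_tsum ℝ]
    rfl
  rw [h1, (mulVecCLM v).map_tsum hsum]
  have hz : ∀ j ∉ Finset.range m,
      mulVecCLM v (((j.factorial : ℝ)⁻¹ : ℝ) • X ^ j) = 0 := by
    intro j hj
    rw [Finset.mem_range, not_lt] at hj
    have : (X ^ j).mulVec v = 0 := by
      have : X ^ j = X ^ (j - m) * X ^ m := by
        rw [← pow_add]; congr 1; omega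
      rw [this, ← Matrix.mulVec_mulVec, hX, Matrix.mulVec_zero]
    simp [Matrix.smul_mulVec, this]
  rw [tsum_eq_sum hz]
  refine Finset.sum_congr rfl fun j _ => ?_
  simp [Matrix.smul_mulVec]

/-- Splitting of `exp (t • A)` along a generalized eigenvector. -/
lemma exp_smul_mulVec_eq (A : Matrix (Fin n) (Fin n) ℂ) (mu : ℂ) (t : ℝ) (v : Fin n → ℂ)
    (hv : (((mu • (1 : Matrix (Fin n) (Fin n) ℂ)) - A) ^ n).mulVec v = 0) :
    (exp (t • A)).mulVec v
      = Complex.exp ((t : ℂ) * mu) •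
          ∑ j ∈ Finset.range n, (((j.factorial : ℝ)⁻¹ * (-t) ^ j : ℝ)) •
            ((((mu • (1 : Matrix (Fin n) (Fin n) ℂ)) - A) ^ j).mulVec v) := by
  set S : Matrix (Fin n) (Fin n) ℂ := (mu • (1 : Matrix (Fin n) (Fin n) ℂ)) - A with hS
  have hone : ((t : ℂ) * mu) • (1 : Matrix (Fin n) (Fin n) ℂ)
      = t • (mu • (1 : Matrix (Fin n) (Fin n) ℂ)) := by
    rw [mul_smul, Complex.coe_smul]
  have hsplit : t • A = ((t : ℂ) * mu) • (1 : Matrix (Fin n) (Fin n) ℂ) + (-t) • S := by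
    rw [hone, hS]
    module
  have hcomm : Commute (((t : ℂ) * mu) • (1 : Matrix (Fin n) (Fin n) ℂ)) ((-t) • S) := by
    apply Commute.smul_left
    apply Commute.smul_right
    exact (Commute.one_left S)
  have hexp : exp (t • A)
      = exp (((t : ℂ) * mu) • (1 : Matrix (Fin n) (Fin n) ℂ)) * exp ((-t) • S) := by
    rw [hsplit]
    exact exp_add_of_commute hcomm
  have hscalar : exp (((t : ℂ) * mu) • (1 : Matrix (Fin n) (Fin n) ℂ))
      = Complex.exp ((t : ℂ) * mu) • (1 : Matrix (Fin n) (Fin n) ℂ) := by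
    have h1 : ((t : ℂ) * mu) • (1 : Matrix (Fin n) (Fin n) ℂ)
        = algebraMap ℂ (Matrix (Fin n) (Fin n) ℂ) ((t : ℂ) * mu) := by
      rw [Algebra.algebraMap_eq_smul_one]
    rw [h1]
    erw [← map_exp (algebraMap ℂ (Matrix (Fin n) (Fin n) ℂ)) (by continuity)]
    rw [Algebra.algebraMap_eq_smul_one]
    congr 1
    rw [← Complex.exp_eq_exp_ℂ]
  have hnil : (((-t) • S) ^ n).mulVec v = 0 := by
    rw [smul_pow, Matrix.smul_mulVec, hv, smul_zero]
  rw [hexp, hscalar, Matrix.smul_mul, Matrix.one_mul, Matrix.smul_mulVec,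
    exp_mulVec_nilpotent _ v n hnil]
  congr 1
  refine Finset.sum_congr rfl fun j _ => ?_
  rw [smul_pow, Matrix.smul_mulVec, smul_smul]


lemma mulVecLin_pow (M : Matrix (Fin n) (Fin n) ℂ) (k : ℕ) :
    (M.mulVecLin) ^ k = (M ^ k).mulVecLin := by
  induction k with
  | zero => simp [Matrix.mulVecLin_one]; rfl
  | succ k ih =>
    rw [pow_succ, pow_succ, Matrix.mulVecLin_mul, ih, Module.End.mul_eq_comp]

lemma end_sub_smul_pow_apply (A : Matrix (Fin n) (Fin n) ℂ) (mu : ℂ) (k : ℕ) (v : Fin n → ℂ) :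
    ((A.mulVecLin - mu • (1 : Module.End ℂ (Fin n → ℂ))) ^ k) v
      = ((A - mu • (1 : Matrix (Fin n) (Fin n) ℂ)) ^ k).mulVec v := by
  have h1 : A.mulVecLin - mu • (1 : Module.End ℂ (Fin n → ℂ))
      = (A - mu • (1 : Matrix (Fin n) (Fin n) ℂ)).mulVecLin := by
    apply LinearMap.ext
    intro w
    show A.mulVec w - mu • w = (A - mu • (1 : Matrix (Fin n) (Fin n) ℂ)).mulVec w
    rw [Matrix.sub_mulVec, Matrix.smul_mulVec, Matrix.one_mulVec]
  rw [h1, mulVecLin_pow]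
  rfl

lemma neg_pow_mulVec_eq_zero {X : Matrix (Fin n) (Fin n) ℂ} {v : Fin n → ℂ} (k : ℕ)
    (h : (X ^ k).mulVec v = 0) : ((-X) ^ k).mulVec v = 0 := by
  rcases Nat.even_or_odd k with he | ho
  · rw [he.neg_pow]; exact h
  · rw [ho.neg_pow, Matrix.neg_mulVec, h, neg_zero]

lemma decomp_in_invariant_subspace (A : Matrix (Fin n) (Fin n) ℂ)
    (N : Submodule ℂ (Fin n → ℂ))
    (hinv : ∀ v ∈ N, A.mulVec v ∈ N) (z0 : Fin n → ℂ) (hz0 : z0 ∈ N) :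
    ∃ c : ℂ →₀ (Fin n → ℂ), (∀ mu, c mu ∈ N) ∧
      (∀ mu, ((mu • (1 : Matrix (Fin n) (Fin n) ℂ) - A) ^ n).mulVec (c mu) = 0) ∧
      (c.sum fun _ v => v) = z0 := by
  set f : Module.End ℂ (Fin n → ℂ) := A.mulVecLin with hf
  have hN : ∀ x : Fin n → ℂ, x ∈ N → f x ∈ N := fun x hx => hinv x hx
  set e : Module.End ℂ N := LinearMap.restrict f hN with he
  have htop : ⨆ mu : ℂ, e.maxGenEigenspace mu = ⊤ :=
    Module.End.iSup_maxGenEigenspace_eq_top e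
  have hz0' : (⟨z0, hz0⟩ : N) ∈ ⨆ mu : ℂ, e.maxGenEigenspace mu := by
    rw [htop]; trivial
  rw [Submodule.mem_iSup_iff_exists_finsupp] at hz0'
  obtain ⟨c', hc'mem, hc'sum⟩ := hz0'
  refine ⟨c'.mapRange (fun w : N => (w : Fin n → ℂ)) rfl, ?_, ?_, ?_⟩
  · intro mu
    rw [Finsupp.mapRange_apply]
    exact (c' mu).2
  · intro mu
    rw [Finsupp.mapRange_apply]
    have hmem : ((c' mu : Fin n → ℂ)) ∈ f.maxGenEigenspace mu := by
      have h1 := hc'mem mu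
      rw [Module.End.maxGenEigenspace, Module.End.genEigenspace_restrict f N ⊤ mu hN] at h1
      exact h1
    have h2 : ((c' mu : Fin n → ℂ)) ∈ f.genEigenspace mu (Module.finrank ℂ (Fin n → ℂ)) := by
      rw [← Module.End.maxGenEigenspace_eq_genEigenspace_finrank]
      exact hmem
    rw [Module.End.mem_genEigenspace_nat, LinearMap.mem_ker] at h2
    rw [Module.finrank_fin_fun] at h2
    rw [hf, end_sub_smul_pow_apply] at h2
    have hns : mu • (1 : Matrix (Fin n) (Fin n) ℂ) - A
        = -(A - mu • (1 : Matrix (Fin n) (Fin n) ℂ)) := (neg_sub _ _).symm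
    rw [hns]
    exact neg_pow_mulVec_eq_zero n h2
  · rw [Finsupp.sum_mapRange_index (by simp)]
    have hcoe := congrArg (Submodule.subtype N) hc'sum
    rw [map_finsuppSum] at hcoe
    exact hcoe


lemma tendsto_pow_mul_exp_neg_mul (j : ℕ) {b : ℝ} (hb : 0 < b) :
    Tendsto (fun t : ℝ => t ^ j * Real.exp (-(b * t))) atTop (nhds 0) := by
  have h1 : Tendsto (fun t : ℝ => b * t) atTop atTop :=
    Tendsto.const_mul_atTop hb tendsto_id
  have h2 := (Real.tendsto_pow_mul_exp_neg_atTop_nhds_zero j).comp h1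
  have h3 : Tendsto (fun t : ℝ => ((b * t) ^ j * Real.exp (-(b * t))) * (b ^ j)⁻¹)
      atTop (nhds 0) := by
    simpa using h2.mul_const (b ^ j)⁻¹
  apply h3.congr
  intro t
  field_simp
  ring

lemma tendsto_cexp_poly_smul (mu : ℂ) (hmu : mu.re < 0) (j : ℕ) (co : ℝ) (b : Fin r → ℂ) :
    Tendsto (fun t : ℝ => Complex.exp ((t : ℂ) * mu) • ((co * (-t) ^ j : ℝ) • b))
      atTop (nhds 0) := by
  rw [tendsto_zero_iff_norm_tendsto_zero]
  have hnorm : ∀ t : ℝ, ‖Complex.exp ((t : ℂ) * mu) • ((co * (-t) ^ j : ℝ) • b)‖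
      = Real.exp (t * mu.re) * (|co| * |t| ^ j) * ‖b‖ := by
    intro t
    rw [norm_smul, norm_smul, Complex.norm_exp]
    simp [abs_mul, abs_pow, mul_assoc, Complex.mul_re]
  simp only [hnorm]
  have key : Tendsto (fun t : ℝ => Real.exp (t * mu.re) * (|co| * |t| ^ j)) atTop (nhds 0) := by
    have hb : 0 < -mu.re := by linarith
    have h1 := tendsto_pow_mul_exp_neg_mul j hb
    have h2 : (fun t : ℝ => t ^ j * Real.exp (-(-mu.re * t))) =ᶠ[atTop]
        (fun t : ℝ => Real.exp (t * mu.re) * |t| ^ j) := by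
      filter_upwards [eventually_ge_atTop (0:ℝ)] with t ht
      rw [abs_of_nonneg ht]
      ring_nf
    have h3 := (h1.congr' h2).const_mul |co|
    simpa [mul_comm, mul_assoc, mul_left_comm] using h3
  simpa using key.mul_const ‖b‖

lemma eq_zero_of_tendsto_cexp_smul (mu : ℂ) (hmu : 0 ≤ mu.re) (b : Fin r → ℂ)
    (h : Tendsto (fun t : ℝ => Complex.exp ((t : ℂ) * mu) • b) atTop (nhds 0)) : b = 0 := by
  have hn := h.norm
  simp only [norm_zero] at hn
  have hev : ∀ᶠ t : ℝ in atTop, ‖b‖ ≤ ‖Complex.exp ((t : ℂ) * mu) • b‖ := by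
    filter_upwards [eventually_ge_atTop (0:ℝ)] with t ht
    rw [norm_smul, Complex.norm_exp]
    have : (1:ℝ) ≤ Real.exp (((t:ℂ) * mu).re) := by
      rw [Real.one_le_exp_iff]
      simp [Complex.mul_re]
      positivity
    nlinarith [norm_nonneg b]
  have := ge_of_tendsto hn hev
  simpa using norm_le_zero_iff.mp this



noncomputable def reVecCLM {m : ℕ} : (Fin m → ℂ) →L[ℝ] (Fin m → ℝ) :=
  LinearMap.toContinuousLinearMap
    { toFun := fun v i => (v i).re
      map_add' := fun v w => by funext i; simp
      map_smul' := fun c v => by funext i; simp }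

@[simp] lemma reVecCLM_apply {m : ℕ} (v : Fin m → ℂ) (i : Fin m) :
    reVecCLM v i = (v i).re := rfl

lemma ofReal_mulVec {a b : ℕ} (M : Matrix (Fin a) (Fin b) ℝ) (x : Fin b → ℝ) :
    (M.map Complex.ofReal).mulVec (fun i => (x i : ℂ)) = fun i => (((M.mulVec x) i : ℝ) : ℂ) := by
  funext i
  simp only [Matrix.mulVec, dotProduct, Matrix.map_apply]
  push_cast
  rfl

lemma re_mulVec {a b : ℕ} (M : Matrix (Fin a) (Fin b) ℝ) (w : Fin b → ℂ) (i : Fin a) :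
    (((M.map Complex.ofReal).mulVec w) i).re = M.mulVec (fun j => (w j).re) i := by
  simp [Matrix.mulVec, dotProduct, Complex.re_sum, Matrix.map_apply]


noncomputable def ofRealVecCLM {m : ℕ} : (Fin m → ℝ) →L[ℝ] (Fin m → ℂ) :=
  LinearMap.toContinuousLinearMap
    { toFun := fun v i => (v i : ℂ)
      map_add' := fun v w => by funext i; simp
      map_smul' := fun c v => by funext i; simp }

@[simp] lemma ofRealVecCLM_apply {m : ℕ} (v : Fin m → ℝ) (i : Fin m) :
    ofRealVecCLM v i = (v i : ℂ) := rfl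

lemma mulVec_finset_sum {q a : ℕ} (M : Matrix (Fin q) (Fin a) ℂ) {ι : Type*} (s : Finset ι)
    (f : ι → Fin a → ℂ) :
    M.mulVec (∑ i ∈ s, f i) = ∑ i ∈ s, M.mulVec (f i) := by
  rw [show M.mulVec (∑ i ∈ s, f i) = matCLM M (∑ i ∈ s, f i) from rfl, map_sum]
  rfl

/-- Expansion of `M *ᵥ exp(t•A) *ᵥ u` for a generalized eigenvector `u`. -/
lemma mulVec_exp_expand {q : ℕ} {n : ℕ} (M : Matrix (Fin q) (Fin n) ℂ)
    (Ac : Matrix (Fin n) (Fin n) ℂ) (mu : ℂ) (t : ℝ) (u : Fin n → ℂ)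
    (hu : (((mu • (1 : Matrix (Fin n) (Fin n) ℂ)) - Ac) ^ n).mulVec u = 0) :
    M.mulVec ((exp (t • Ac)).mulVec u)
      = Complex.exp ((t : ℂ) * mu) • ∑ j ∈ Finset.range n,
          (((j.factorial : ℝ)⁻¹ * (-t) ^ j : ℝ)) •
            (M.mulVec ((((mu • (1 : Matrix (Fin n) (Fin n) ℂ)) - Ac) ^ j).mulVec u)) := by
  rw [exp_smul_mulVec_eq Ac mu t u hu, Matrix.mulVec_smul, mulVec_finset_sum]
  congr 1
  refine Finset.sum_congr rfl fun j _ => ?_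
  rw [Matrix.mulVec_smul]

end AuxStmt5
section Main

variable {n p r : ℕ}

lemma backward_dir (A : Matrix (Fin n) (Fin n) ℝ) (C : Matrix (Fin p) (Fin n) ℝ)
    (K : Matrix (Fin r) (Fin n) ℝ)
    (hK : ∀ lam : ℂ, 0 ≤ lam.re → ∀ v : Fin n → ℂ,
      (∀ j, j < n → ((C.map Complex.ofReal) *
        (lam • (1 : Matrix (Fin n) (Fin n) ℂ) - A.map Complex.ofReal) ^ j).mulVec v = 0) →
      ((lam • (1 : Matrix (Fin n) (Fin n) ℂ) - A.map Complex.ofReal) ^ n).mulVec v = 0 →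
      (K.map Complex.ofReal).mulVec v = 0)
    (x : ℝ → (Fin n → ℝ)) (hdiff : Differentiable ℝ x)
    (hderiv : ∀ t : ℝ, 0 ≤ t → deriv x t = A.mulVec (x t))
    (hCx : ∀ t : ℝ, 0 ≤ t → C.mulVec (x t) = 0) :
    Filter.Tendsto (fun t => K.mulVec (x t)) Filter.atTop (nhds 0) := by
  set Ac : Matrix (Fin n) (Fin n) ℂ := A.map Complex.ofReal with hAc
  set Cm : Matrix (Fin p) (Fin n) ℂ := C.map Complex.ofReal with hCm
  set Km : Matrix (Fin r) (Fin n) ℂ := K.map Complex.ofReal with hKm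
  set z : ℝ → (Fin n → ℂ) := fun t => ofRealVecCLM (x t) with hz_def
  -- z is a complex solution
  have hzc : Continuous z := ofRealVecCLM.continuous.comp hdiff.continuous
  have hzD : ∀ t : ℝ, 0 ≤ t → HasDerivAt z (Ac.mulVec (z t)) t := by
    intro t ht
    have hx : HasDerivAt x (A.mulVec (x t)) t := by
      have := (hdiff t).hasDerivAt
      rwa [hderiv t ht] at this
    have h1 := ofRealVecCLM.hasFDerivAt.comp_hasDerivAt t hx
    have h2 : (ofRealVecCLM (A.mulVec (x t)) : Fin n → ℂ) = Ac.mulVec (z t) := by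
      rw [hAc]
      have := ofReal_mulVec A (x t)
      funext i
      rw [ofRealVecCLM_apply]
      exact (congrFun this i).symm
    rwa [h2] at h1
  have hzexp : ∀ t : ℝ, 0 ≤ t → z t = (exp (t • Ac)).mulVec (z 0) :=
    solution_eq_exp Ac z hzc hzD
  set z0 : Fin n → ℂ := z 0 with hz0_def
  -- C kills the trajectory
  have hCz : ∀ t : ℝ, 0 ≤ t → Cm.mulVec ((exp (t • Ac)).mulVec z0) = 0 := by
    intro t ht
    rw [← hzexp t ht, hCm]
    have h1 : Cm.mulVec (z t) = fun i => ((C.mulVec (x t)) i : ℂ) := ofReal_mulVec C (x t)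
    rw [h1, hCx t ht]
    funext i
    simp
  have hobs : ∀ j : ℕ, (Cm * Ac ^ j).mulVec z0 = 0 := by
    intro j
    have := obs_iterate Ac Cm z0 hCz j 0 le_rfl
    simpa [exp_zero] using this
  -- The unobservable subspace
  set N : Submodule ℂ (Fin n → ℂ) :=
    ⨅ j : ℕ, LinearMap.ker ((Cm * Ac ^ j).mulVecLin) with hN_def
  have hmemN : ∀ v : Fin n → ℂ, v ∈ N ↔ ∀ j : ℕ, (Cm * Ac ^ j).mulVec v = 0 := by
    intro v
    simp [hN_def, Submodule.mem_iInf, LinearMap.mem_ker]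
  have hz0N : z0 ∈ N := (hmemN z0).mpr hobs
  have hNinv : ∀ v ∈ N, Ac.mulVec v ∈ N := by
    intro v hv
    rw [hmemN] at hv ⊢
    intro j
    rw [Matrix.mulVec_mulVec, Matrix.mul_assoc, ← pow_succ]
    exact hv (j + 1)
  have hNC : ∀ v ∈ N, Cm.mulVec v = 0 := by
    intro v hv
    have := (hmemN v).mp hv 0
    simpa using this
  obtain ⟨c, hcN, hcgen, hcsum⟩ := decomp_in_invariant_subspace Ac N hNinv z0 hz0N
  -- Main limit
  have hKz : Filter.Tendsto (fun t : ℝ => Km.mulVec ((exp (t • Ac)).mulVec z0))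
      Filter.atTop (nhds 0) := by
    have hsplit : ∀ t : ℝ, Km.mulVec ((exp (t • Ac)).mulVec z0)
        = ∑ mu ∈ c.support, Km.mulVec ((exp (t • Ac)).mulVec (c mu)) := by
      intro t
      rw [← hcsum, Finsupp.sum, mulVec_finset_sum, mulVec_finset_sum]
    rw [show (0 : Fin r → ℂ) = ∑ mu ∈ c.support, (0 : Fin r → ℂ) by simp]
    apply Filter.Tendsto.congr (fun t => (hsplit t).symm)
    apply tendsto_finset_sum
    intro mu _
    by_cases hre : 0 ≤ mu.re
    · -- unstable eigenvalue: K kills everything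
      have hzero : ∀ t : ℝ, Km.mulVec ((exp (t • Ac)).mulVec (c mu)) = 0 := by
        intro t
        rw [mulVec_exp_expand Km Ac mu t (c mu) (hcgen mu)]
        have hterm : ∀ j ∈ Finset.range n,
            (((j.factorial : ℝ)⁻¹ * (-t) ^ j : ℝ)) •
              (Km.mulVec ((((mu • (1 : Matrix (Fin n) (Fin n) ℂ)) - Ac) ^ j).mulVec (c mu)))
            = 0 := by
          intro j _
          set S : Matrix (Fin n) (Fin n) ℂ := mu • (1 : Matrix (Fin n) (Fin n) ℂ) - Ac with hS
          have hSinv : ∀ v ∈ N, S.mulVec v ∈ N := by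
            intro v hv
            rw [hS, Matrix.sub_mulVec, Matrix.smul_mulVec, Matrix.one_mulVec]
            exact N.sub_mem (N.smul_mem mu hv) (hNinv v hv)
          have hSpowN : ∀ k : ℕ, ∀ v ∈ N, (S ^ k).mulVec v ∈ N := by
            intro k
            induction k with
            | zero => intro v hv; simpa using hv
            | succ k ih =>
              intro v hv
              have : (S ^ (k + 1)).mulVec v = (S ^ k).mulVec (S.mulVec v) := by
                rw [Matrix.mulVec_mulVec, ← pow_succ]
              rw [this]
              exact ih _ (hSinv v hv)
          set u : Fin n → ℂ := (S ^ j).mulVec (c mu) with hu_def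
          have huN : u ∈ N := hSpowN j (c mu) (hcN mu)
          have hu1 : ∀ i, i < n → (Cm * S ^ i).mulVec u = 0 := by
            intro i _
            rw [← Matrix.mulVec_mulVec]
            exact hNC _ (hSpowN i u huN)
          have hu2 : (S ^ n).mulVec u = 0 := by
            rw [hu_def, Matrix.mulVec_mulVec, ← pow_add, Nat.add_comm, pow_add,
              ← Matrix.mulVec_mulVec, hcgen mu, Matrix.mulVec_zero]
          have := hK mu hre u hu1 hu2
          rw [this, smul_zero]
        rw [Finset.sum_eq_zero hterm, smul_zero]
      rw [show (0 : Fin r → ℂ) = Km.mulVec ((exp ((0:ℝ) • Ac)).mulVec (c mu)) - Km.mulVec ((exp ((0:ℝ) • Ac)).mulVec (c mu)) by simp]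
      simp only [hzero]
      simpa using tendsto_const_nhds
    · -- stable eigenvalue
      push_neg at hre
      have hexpand : (fun t : ℝ => Km.mulVec ((exp (t • Ac)).mulVec (c mu)))
          = fun t : ℝ => ∑ j ∈ Finset.range n, Complex.exp ((t : ℂ) * mu) •
              ((((j.factorial : ℝ)⁻¹ * (-t) ^ j : ℝ)) •
                (Km.mulVec ((((mu • (1 : Matrix (Fin n) (Fin n) ℂ)) - Ac) ^ j).mulVec (c mu)))) := by
        funext t
        rw [mulVec_exp_expand Km Ac mu t (c mu) (hcgen mu), Finset.smul_sum]
      rw [hexpand]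
      rw [show (0 : Fin r → ℂ) = ∑ _j ∈ Finset.range n, (0 : Fin r → ℂ) by simp]
      apply tendsto_finset_sum
      intro j _
      exact tendsto_cexp_poly_smul mu hre j ((j.factorial : ℝ)⁻¹) _
  -- transfer back to the real statement
  have hfinal : (fun t : ℝ => K.mulVec (x t)) =ᶠ[Filter.atTop]
      (fun t : ℝ => reVecCLM (Km.mulVec ((exp (t • Ac)).mulVec z0))) := by
    filter_upwards [Filter.eventually_ge_atTop (0:ℝ)] with t ht
    funext i
    rw [reVecCLM_apply, ← hzexp t ht]
    have := re_mulVec K (z t) i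
    rw [← hKm] at this
    rw [this]
    congr 1
  rw [show (0 : Fin r → ℝ) = reVecCLM (0 : Fin r → ℂ) by simp]
  exact Filter.Tendsto.congr' hfinal.symm ((reVecCLM.continuous.tendsto 0).comp hKz)

lemma forward_dir (A : Matrix (Fin n) (Fin n) ℝ) (C : Matrix (Fin p) (Fin n) ℝ)
    (K : Matrix (Fin r) (Fin n) ℝ)
    (hdet : ∀ x : ℝ → (Fin n → ℝ), Differentiable ℝ x →
        (∀ t : ℝ, 0 ≤ t → deriv x t = A.mulVec (x t)) →
        (∀ t : ℝ, 0 ≤ t → C.mulVec (x t) = 0) →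
        Filter.Tendsto (fun t => K.mulVec (x t)) Filter.atTop (nhds 0))
    (lam : ℂ) (hlam : 0 ≤ lam.re) (v : Fin n → ℂ)
    (hCj : ∀ j, j < n → ((C.map Complex.ofReal) *
      (lam • (1 : Matrix (Fin n) (Fin n) ℂ) - A.map Complex.ofReal) ^ j).mulVec v = 0)
    (hSn : ((lam • (1 : Matrix (Fin n) (Fin n) ℂ) - A.map Complex.ofReal) ^ n).mulVec v = 0) :
    (K.map Complex.ofReal).mulVec v = 0 := by
  set Ac : Matrix (Fin n) (Fin n) ℂ := A.map Complex.ofReal with hAc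
  set Cm : Matrix (Fin p) (Fin n) ℂ := C.map Complex.ofReal with hCm
  set Km : Matrix (Fin r) (Fin n) ℂ := K.map Complex.ofReal with hKm
  set S : Matrix (Fin n) (Fin n) ℂ := lam • (1 : Matrix (Fin n) (Fin n) ℂ) - Ac with hS
  -- For any vector satisfying the kernel conditions, the real/imaginary parts of
  -- `exp (t•A) *ᵥ u` give solutions of the ODE with `Cx ≡ 0`.
  have solRe : ∀ u : Fin n → ℂ,
      (∀ j, j < n → (Cm * S ^ j).mulVec u = 0) → (S ^ n).mulVec u = 0 →
      Filter.Tendsto (fun t : ℝ => reVecCLM (Km.mulVec ((exp (t • Ac)).mulVec u)))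
        Filter.atTop (nhds 0) := by
    intro u hCu hSu
    set xf : ℝ → Fin n → ℝ := fun t => reVecCLM ((exp (t • Ac)).mulVec u) with hxf
    have hxD : ∀ t : ℝ, HasDerivAt xf (A.mulVec (xf t)) t := by
      intro t
      have h1 := reVecCLM.hasFDerivAt.comp_hasDerivAt t (hasDerivAt_exp_mulVec Ac u t)
      have h2 : (reVecCLM (Ac.mulVec ((exp (t • Ac)).mulVec u)) : Fin n → ℝ)
          = A.mulVec (xf t) := by
        funext i
        rw [reVecCLM_apply, hAc, re_mulVec A _ i]
        rfl
      rwa [h2] at h1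
    have hdiffx : Differentiable ℝ xf := fun t => (hxD t).differentiableAt
    have hderivx : ∀ t : ℝ, 0 ≤ t → deriv xf t = A.mulVec (xf t) :=
      fun t _ => (hxD t).deriv
    have hCxf : ∀ t : ℝ, 0 ≤ t → C.mulVec (xf t) = 0 := by
      intro t _
      have hCmz : Cm.mulVec ((exp (t • Ac)).mulVec u) = 0 := by
        rw [mulVec_exp_expand Cm Ac lam t u hSu]
        rw [Finset.sum_eq_zero, smul_zero]
        intro j hj
        have hz : Cm.mulVec ((((lam • (1 : Matrix (Fin n) (Fin n) ℂ)) - Ac) ^ j).mulVec u)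
            = 0 := by
          rw [Matrix.mulVec_mulVec]
          exact hCu j (Finset.mem_range.mp hj)
        rw [hz, smul_zero]
      funext i
      have h3 : C.mulVec (xf t) i = (Cm.mulVec ((exp (t • Ac)).mulVec u) i).re := by
        rw [hCm, re_mulVec C _ i]
        rfl
      rw [h3, hCmz]
      rfl
    have := hdet xf hdiffx hderivx hCxf
    have hKxf : (fun t => K.mulVec (xf t))
        = fun t : ℝ => reVecCLM (Km.mulVec ((exp (t • Ac)).mulVec u)) := by
      funext t i
      rw [reVecCLM_apply, hKm, re_mulVec K _ i]
      rfl
    rwa [hKxf] at this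
  -- main induction on the nilpotency order
  have main : ∀ m : ℕ, ∀ w : Fin n → ℂ,
      (∀ j, j < n → (Cm * S ^ j).mulVec w = 0) → (S ^ n).mulVec w = 0 →
      (S ^ m).mulVec w = 0 → Km.mulVec w = 0 := by
    intro m
    induction m with
    | zero =>
      intro w _ _ h0
      rw [pow_zero, Matrix.one_mulVec] at h0
      rw [h0, Matrix.mulVec_zero]
    | succ m ih =>
      intro w hCw hSw hm
      rcases Nat.eq_zero_or_pos n with hn | hn
      · have hw0 : w = 0 := by
          funext i
          exact absurd i.isLt (by omega)
        rw [hw0, Matrix.mulVec_zero]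
      -- invariance of the kernel conditions under S
      have hkerS : ∀ u : Fin n → ℂ,
          ((∀ j, j < n → (Cm * S ^ j).mulVec u = 0) ∧ (S ^ n).mulVec u = 0) →
          ((∀ j, j < n → (Cm * S ^ j).mulVec (S.mulVec u) = 0) ∧
            (S ^ n).mulVec (S.mulVec u) = 0) := by
        rintro u ⟨h1, h2⟩
        constructor
        · intro j hj
          rw [Matrix.mulVec_mulVec, Matrix.mul_assoc, ← pow_succ]
          rcases Nat.lt_or_ge (j + 1) n with h | h
          · exact h1 (j + 1) h
          · have hjn : j + 1 = n := by omega
            rw [hjn, ← Matrix.mulVec_mulVec, h2, Matrix.mulVec_zero]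
        · rw [Matrix.mulVec_mulVec, ← pow_succ, pow_succ', ← Matrix.mulVec_mulVec, h2,
            Matrix.mulVec_zero]
      have hkerPow : ∀ k : ℕ, ∀ u : Fin n → ℂ,
          ((∀ j, j < n → (Cm * S ^ j).mulVec u = 0) ∧ (S ^ n).mulVec u = 0) →
          ((∀ j, j < n → (Cm * S ^ j).mulVec ((S ^ k).mulVec u) = 0) ∧
            (S ^ n).mulVec ((S ^ k).mulVec u) = 0) := by
        intro k
        induction k with
        | zero =>
          intro u h
          simpa using h
        | succ k ihk =>
          intro u h
          have h1 := hkerS _ (ihk u h)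
          have he : (S ^ (k + 1)).mulVec u = S.mulVec ((S ^ k).mulVec u) := by
            rw [Matrix.mulVec_mulVec, ← pow_succ']
          rw [he]
          exact h1
      -- K kills S^j w for j ≥ 1, by the induction hypothesis
      have hKj : ∀ j : ℕ, 1 ≤ j → Km.mulVec ((S ^ j).mulVec w) = 0 := by
        intro j hj
        have hker := hkerPow j w ⟨hCw, hSw⟩
        apply ih _ hker.1 hker.2
        rw [Matrix.mulVec_mulVec, ← pow_add]
        have hmj : m + j = (j - 1) + (m + 1) := by omega
        rw [hmj, pow_add, ← Matrix.mulVec_mulVec, hm, Matrix.mulVec_zero]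
      -- the K-output along the trajectory
      have hKexp : ∀ t : ℝ, Km.mulVec ((exp (t • Ac)).mulVec w)
          = Complex.exp ((t : ℂ) * lam) • (Km.mulVec w) := by
        intro t
        rw [mulVec_exp_expand Km Ac lam t w hSw]
        congr 1
        rw [Finset.sum_eq_single_of_mem 0 (Finset.mem_range.mpr hn)]
        · simp
        · intro j _ hj0
          have hz : Km.mulVec ((((lam • (1 : Matrix (Fin n) (Fin n) ℂ)) - Ac) ^ j).mulVec w)
              = 0 := hKj j (Nat.one_le_iff_ne_zero.mpr hj0)
          rw [hz, smul_zero]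
      have h1 := solRe w hCw hSw
      have hIw1 : ∀ j, j < n → (Cm * S ^ j).mulVec (Complex.I • w) = 0 := by
        intro j hj
        rw [Matrix.mulVec_smul, hCw j hj, smul_zero]
      have hIw2 : (S ^ n).mulVec (Complex.I • w) = 0 := by
        rw [Matrix.mulVec_smul, hSw, smul_zero]
      have h2 := solRe (Complex.I • w) hIw1 hIw2
      set g : ℝ → Fin r → ℂ := fun t => Complex.exp ((t : ℂ) * lam) • Km.mulVec w with hg
      have h1' : Filter.Tendsto (fun t : ℝ => reVecCLM (g t)) Filter.atTop (nhds 0) := by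
        apply h1.congr
        intro t
        rw [hKexp t]
      have h2' : Filter.Tendsto (fun t : ℝ => reVecCLM (Complex.I • g t))
          Filter.atTop (nhds 0) := by
        apply h2.congr
        intro t
        rw [show (exp (t • Ac)).mulVec (Complex.I • w)
            = Complex.I • ((exp (t • Ac)).mulVec w) from Matrix.mulVec_smul _ _ _,
          show Km.mulVec (Complex.I • ((exp (t • Ac)).mulVec w))
            = Complex.I • Km.mulVec ((exp (t • Ac)).mulVec w) from Matrix.mulVec_smul _ _ _,
          hKexp t]
      have hre : ∀ i : Fin r, Filter.Tendsto (fun t : ℝ => (g t i).re) Filter.atTop (nhds 0) := by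
        intro i
        have := (tendsto_pi_nhds.mp h1') i
        simpa using this
      have him : ∀ i : Fin r, Filter.Tendsto (fun t : ℝ => (g t i).im) Filter.atTop (nhds 0) := by
        intro i
        have h3 := (tendsto_pi_nhds.mp h2') i
        have h4 : (fun t : ℝ => reVecCLM (Complex.I • g t) i)
            = fun t : ℝ => -((g t i).im) := by
          funext t
          rw [reVecCLM_apply]
          have : (Complex.I • g t) i = Complex.I * g t i := rfl
          rw [this]
          simp [Complex.mul_re]
        rw [h4] at h3
        have := h3.neg
        simpa using this
      have hgtend : Filter.Tendsto g Filter.atTop (nhds 0) := by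
        rw [tendsto_pi_nhds]
        intro i
        have he : (fun t : ℝ => g t i)
            = fun t : ℝ => ((g t i).re : ℂ) + ((g t i).im : ℂ) * Complex.I :=
          funext fun t => (Complex.re_add_im _).symm
        rw [he]
        have tre : Filter.Tendsto (fun t : ℝ => ((g t i).re : ℂ)) Filter.atTop (nhds 0) := by
          have := (Complex.continuous_ofReal.tendsto 0).comp (hre i)
          simpa [Function.comp_def] using this
        have tim : Filter.Tendsto (fun t : ℝ => ((g t i).im : ℂ)) Filter.atTop (nhds 0) := by
          have := (Complex.continuous_ofReal.tendsto 0).comp (him i)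
          simpa [Function.comp_def] using this
        have := tre.add (tim.mul_const Complex.I)
        simpa using this
      exact eq_zero_of_tendsto_cexp_smul lam hlam (Km.mulVec w) hgtend
  exact main n v hCj hSn hSn

/-- **Theorem 1, (1) ⇔ (2).** The pair `(A, C)` is partially detectable
with respect to `K` (every differentiable solution of `x' = Ax` with `Cx ≡ 0` on
`[0,∞)` satisfies `Kx(t) → 0`) if and only if for every `λ ∈ ℂ` with `Re λ ≥ 0`, the
rank of `D_{[A,C],n,λ}` stacked on top of `K` equals the rank of `D_{[A,C],n,λ}`. -/
theorem stmt_5 (n p r : ℕ) (A : Matrix (Fin n) (Fin n) ℝ) (C : Matrix (Fin p) (Fin n) ℝ)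
    (K : Matrix (Fin r) (Fin n) ℝ) :
    (∀ x : ℝ → (Fin n → ℝ), Differentiable ℝ x →
        (∀ t : ℝ, 0 ≤ t → deriv x t = A.mulVec (x t)) →
        (∀ t : ℝ, 0 ≤ t → C.mulVec (x t) = 0) →
        Filter.Tendsto (fun t => K.mulVec (x t)) Filter.atTop (nhds 0)) ↔
    (∀ lam : ℂ, 0 ≤ lam.re →
        (Matrix.fromRows (Dstack n A C lam) (K.map Complex.ofReal)).rank =
          (Dstack n A C lam).rank) := by
  constructor
  · intro hdet lam hlam
    rw [rank_fromRows_eq_iff]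
    intro v hv
    rw [dstack_mulVec_eq_zero_iff] at hv
    exact forward_dir A C K hdet lam hlam v hv.1 hv.2
  · intro hrank
    apply backward_dir A C K
    intro lam hlam v h1 h2
    exact (rank_fromRows_eq_iff _ _).mp (hrank lam hlam) v
      ((dstack_mulVec_eq_zero_iff A C lam v).mpr ⟨h1, h2⟩)

end Main
end

section
/- (Theorem 1, equivalence of (2) and (3).) Let A ∈ ℝ^{n×n}, C ∈ ℝ^{p×n}, K ∈ ℝ^{r×n}, and let P ∈ ℝ^{n×n} be an orthogonal matrix such that, with block sizes n₁, n₂, n₃ (n₁+n₂+n₃ = n): PᵀAP = [[A₁,0,0],[A₂₁,A₂,0],[A₃₁,A₃₂,A₃]], CP = [C₁,0,0], KP = [K₁,K₂,K₃], where (A₁,C₁) is observable, every complex eigenvalue of A₂ has negative real part, and every complex eigenvalue of A₃ has nonnegative real part. Then the following are equivalent: (i) for every λ ∈ ℂ with Re λ ≥ 0, the rank of the complex matrix obtained by stacking D_{[A,C],n,λ} on top of K equals the rank of D_{[A,C],n,λ}; (ii) K₃ = 0. -/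
open Matrix

section MyHelpers

variable {m k α β ι κ : Type*}

lemma myConjPow [Fintype m] [Fintype k] [DecidableEq m] [DecidableEq k]
    (P : Matrix m k ℂ) (M : Matrix k k ℂ) (h1 : Pᵀ * P = 1) (h2 : P * Pᵀ = 1) (j : ℕ) :
    (P * M * Pᵀ) ^ j = P * M ^ j * Pᵀ := by
  induction j with
  | zero => simp [h2]
  | succ j ih =>
    rw [pow_succ, pow_succ, ih]
    calc P * M ^ j * Pᵀ * (P * M * Pᵀ) = P * M ^ j * (Pᵀ * P) * M * Pᵀ := by
          simp only [Matrix.mul_assoc]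
      _ = P * (M ^ j * M) * Pᵀ := by rw [h1]; simp only [Matrix.mul_one, Matrix.mul_assoc]

lemma myBlockPow [Fintype α] [Fintype β] [DecidableEq α] [DecidableEq β]
    (X : Matrix α α ℂ) (Y : Matrix β α ℂ) (Z : Matrix β β ℂ) (k : ℕ) :
    ∃ W, (fromBlocks X 0 Y Z) ^ k = fromBlocks (X ^ k) 0 W (Z ^ k) := by
  induction k with
  | zero => exact ⟨0, by simp [← Matrix.fromBlocks_one]⟩
  | succ k ih =>
    obtain ⟨W, hW⟩ := ih
    refine ⟨W * X + Z ^ k * Y, ?_⟩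
    rw [pow_succ, hW, Matrix.fromBlocks_multiply]
    simp [pow_succ]

lemma myRankNullity {q n : Type*} [Fintype q] [Fintype n] [DecidableEq n] (Q : Matrix q n ℂ) :
    Q.rank + Module.finrank ℂ (LinearMap.ker Q.mulVecLin) = Fintype.card n := by
  have := LinearMap.finrank_range_add_finrank_ker Q.mulVecLin
  rwa [Module.finrank_pi] at this

lemma myRankIff {m r n : Type*} [Fintype m] [Fintype r] [Fintype n] [DecidableEq n]
    (M : Matrix m n ℂ) (N : Matrix r n ℂ) :
    (fromRows M N).rank = M.rank ↔ ∀ v, M *ᵥ v = 0 → N *ᵥ v = 0 := by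
  have hker : LinearMap.ker (fromRows M N).mulVecLin
      = LinearMap.ker M.mulVecLin ⊓ LinearMap.ker N.mulVecLin := by
    ext v
    simp only [LinearMap.mem_ker, Matrix.mulVecLin_apply, Submodule.mem_inf,
      fromRows_mulVec]
    constructor
    · intro h
      constructor
      · funext i; exact congrFun h (Sum.inl i)
      · funext i; exact congrFun h (Sum.inr i)
    · rintro ⟨h1, h2⟩
      funext i
      cases i with
      | inl i => exact congrFun h1 i
      | inr i => exact congrFun h2 i
  constructor
  · intro h v hv
    have h1 := myRankNullity (fromRows M N)
    have h2 := myRankNullity M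
    rw [h] at h1
    have hfr : Module.finrank ℂ (LinearMap.ker (fromRows M N).mulVecLin)
        = Module.finrank ℂ (LinearMap.ker M.mulVecLin) := by omega
    have hle : LinearMap.ker (fromRows M N).mulVecLin ≤ LinearMap.ker M.mulVecLin := by
      rw [hker]; exact inf_le_left
    have heq := Submodule.eq_of_le_of_finrank_eq hle hfr
    have hvmem : v ∈ LinearMap.ker (fromRows M N).mulVecLin := by
      rw [heq]; simpa [LinearMap.mem_ker, Matrix.mulVecLin_apply] using hv
    rw [hker] at hvmem
    simpa [LinearMap.mem_ker, Matrix.mulVecLin_apply] using hvmem.2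
  · intro h
    have hkeq : LinearMap.ker (fromRows M N).mulVecLin = LinearMap.ker M.mulVecLin := by
      rw [hker]
      refine le_antisymm inf_le_left (le_inf le_rfl ?_)
      intro v hv
      simp only [LinearMap.mem_ker, Matrix.mulVecLin_apply] at hv ⊢
      exact h v hv
    have h1 := myRankNullity (fromRows M N)
    have h2 := myRankNullity M
    rw [hkeq] at h1
    omega

lemma myReIm {a b : Type*} [Fintype b] (M : Matrix a b ℝ) (v : b → ℂ)
    (h : (M.map Complex.ofReal) *ᵥ v = 0) :
    M *ᵥ (fun j => (v j).re) = 0 ∧ M *ᵥ (fun j => (v j).im) = 0 := by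
  constructor <;> funext i <;>
  · have h0 := congrFun h i
    simp only [Matrix.mulVec, dotProduct, Matrix.map_apply, Pi.zero_apply] at h0 ⊢
    rw [Complex.ext_iff] at h0
    simp only [Complex.re_sum, Complex.im_sum, Complex.mul_re, Complex.mul_im,
      Complex.ofReal_re, Complex.ofReal_im, zero_mul, sub_zero, zero_add,
      Complex.zero_re, Complex.zero_im] at h0
    simp only [add_zero] at h0
    first
    | exact h0.1
    | exact h0.2

lemma myBinom {ι κ : Type*} [Fintype ι] [Fintype κ] [DecidableEq ι]
    (Cm : Matrix κ ι ℂ) (Am : Matrix ι ι ℂ) (lam : ℂ) (w : ι → ℂ) (j : ℕ)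
    (h : ∀ i ≤ j, (Cm * (lam • (1 : Matrix ι ι ℂ) - Am) ^ i) *ᵥ w = 0) :
    (Cm * Am ^ j) *ᵥ w = 0 := by
  set B := lam • (1 : Matrix ι ι ℂ) - Am with hB
  have hAm : Am = lam • (1 : Matrix ι ι ℂ) + (-B) := by
    rw [hB]; abel
  have hcomm : Commute (lam • (1 : Matrix ι ι ℂ)) (-B) := ((Commute.one_left (-B)).smul_left lam)
  rw [hAm, hcomm.add_pow, Matrix.mul_sum]
  have hsumv : (∑ m ∈ Finset.range (j + 1),
      Cm * ((lam • (1 : Matrix ι ι ℂ)) ^ m * (-B) ^ (j - m) * ((j.choose m : ℕ) : Matrix ι ι ℂ))) *ᵥ w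
      = ∑ m ∈ Finset.range (j + 1),
      (Cm * ((lam • (1 : Matrix ι ι ℂ)) ^ m * (-B) ^ (j - m) * ((j.choose m : ℕ) : Matrix ι ι ℂ))) *ᵥ w := by
    induction (Finset.range (j + 1)) using Finset.cons_induction with
    | empty => simp
    | cons a s ha ih => simp only [Finset.sum_cons, Matrix.add_mulVec, ih]
  rw [hsumv]
  refine Finset.sum_eq_zero fun m hm => ?_
  have hsc : (lam • (1 : Matrix ι ι ℂ)) ^ m * (-B) ^ (j - m) * ((j.choose m : ℕ) : Matrix ι ι ℂ)
      = (lam ^ m * (-1) ^ (j - m) * (j.choose m : ℂ)) • B ^ (j - m) := by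
    have h1 : (lam • (1 : Matrix ι ι ℂ)) ^ m = lam ^ m • 1 := by rw [smul_pow, one_pow]
    have h2 : (-B) ^ (j - m) = ((-1 : ℂ) ^ (j - m)) • B ^ (j - m) := by
      rw [← neg_one_smul ℂ B, smul_pow]
    have h3 : ((j.choose m : ℕ) : Matrix ι ι ℂ) = (j.choose m : ℂ) • 1 := by
      rw [← map_natCast (algebraMap ℂ (Matrix ι ι ℂ)) (j.choose m),
        Algebra.algebraMap_eq_smul_one]
    rw [h1, h2, h3]
    simp only [smul_mul_assoc, mul_smul_comm, Matrix.mul_one, Matrix.one_mul, smul_smul]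
    ring_nf
  rw [hsc, Matrix.mul_smul, Matrix.smul_mulVec, h (j - m) (Nat.sub_le j m), smul_zero]

lemma myMapMul {a b c : Type*} [Fintype b] (M : Matrix a b ℝ) (N : Matrix b c ℝ) :
    (M * N).map Complex.ofReal = M.map Complex.ofReal * N.map Complex.ofReal :=
  Matrix.map_mul (f := Complex.ofRealHom)

lemma myMapOne {a : Type*} [DecidableEq a] [Fintype a] :
    (1 : Matrix a a ℝ).map Complex.ofReal = 1 :=
  Matrix.map_one _ (by simp) (by simp)

lemma myMapZero {a b : Type*} : (0 : Matrix a b ℝ).map Complex.ofReal = 0 := by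
  ext; simp

lemma myMapPow {a : Type*} [Fintype a] [DecidableEq a] (M : Matrix a a ℝ) (k : ℕ) :
    (M ^ k).map Complex.ofReal = (M.map Complex.ofReal) ^ k := by
  induction k with
  | zero => simpa using myMapOne
  | succ k ih => rw [pow_succ, pow_succ, myMapMul, ih]

lemma myMapT {a b : Type*} (M : Matrix a b ℝ) :
    (Mᵀ).map Complex.ofReal = (M.map Complex.ofReal)ᵀ := Matrix.transpose_map

lemma myMapFromColumns {a b c : Type*} (M : Matrix a b ℝ) (N : Matrix a c ℝ) :
    (fromCols M N).map Complex.ofReal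
      = fromCols (M.map Complex.ofReal) (N.map Complex.ofReal) := by
  ext i j
  cases j <;> rfl

lemma myMapFromRows {a b c : Type*} (M : Matrix a c ℝ) (N : Matrix b c ℝ) :
    (fromRows M N).map Complex.ofReal
      = fromRows (M.map Complex.ofReal) (N.map Complex.ofReal) := by
  ext i j
  cases i <;> rfl

lemma myFromBlocksSub {a b : Type*} (A A' : Matrix a a ℂ) (B B' : Matrix a b ℂ)
    (C C' : Matrix b a ℂ) (D D' : Matrix b b ℂ) :
    fromBlocks A B C D - fromBlocks A' B' C' D'
      = fromBlocks (A - A') (B - B') (C - C') (D - D') := by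
  rw [sub_eq_add_neg, Matrix.fromBlocks_neg, Matrix.fromBlocks_add]
  simp [sub_eq_add_neg]

lemma mySmulOneBlocks {a b : Type*} [DecidableEq a] [DecidableEq b] (lam : ℂ) :
    lam • (1 : Matrix (a ⊕ b) (a ⊕ b) ℂ)
      = fromBlocks (lam • (1 : Matrix a a ℂ)) 0 0 (lam • (1 : Matrix b b ℂ)) := by
  rw [← Matrix.fromBlocks_one, Matrix.fromBlocks_smul]
  simp

lemma myUnitKill {a : Type*} [Fintype a] [DecidableEq a] (M : Matrix a a ℂ)
    (hU : IsUnit M) (k : ℕ) (u : a → ℂ) (h : M ^ k *ᵥ u = 0) : u = 0 := by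
  obtain ⟨V, hV⟩ := (hU.pow k).exists_left_inv
  calc u = (V * M ^ k) *ᵥ u := by rw [hV, Matrix.one_mulVec]
    _ = V *ᵥ (M ^ k *ᵥ u) := by rw [Matrix.mulVec_mulVec]
    _ = 0 := by rw [h, Matrix.mulVec_zero]

lemma mySpectrumMem {a : Type*} [Fintype a] [DecidableEq a] (M : Matrix a a ℂ) (μ : ℂ)
    (k : ℕ) (u : a → ℂ) (hu : u ≠ 0)
    (h : (μ • (1 : Matrix a a ℂ) - M) ^ k *ᵥ u = 0) : μ ∈ spectrum ℂ M := by
  rw [spectrum.mem_iff]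
  intro hunit
  rw [Algebra.algebraMap_eq_smul_one] at hunit
  exact hu (myUnitKill _ hunit k u h)

lemma myNegPowVec {a : Type*} [Fintype a] [DecidableEq a] (M : Matrix a a ℂ) (k : ℕ)
    (u : a → ℂ) (h : M ^ k *ᵥ u = 0) : (-M) ^ k *ᵥ u = 0 := by
  rw [← neg_one_smul ℂ M, smul_pow, Matrix.smul_mulVec, h, smul_zero]

end MyHelpers


/-- **Theorem 1, (2) ⇔ (3).** Given an orthogonal matrix `P` realizing the
observability/stability decomposition of `(A, C, K)` with diagonal blocks of sizes
`n₁, n₂, n₃`, the rank condition "for every `λ` with `Re λ ≥ 0`,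
`rank [D_{[A,C],n,λ}; K] = rank D_{[A,C],n,λ}`" holds if and only if `K₃ = 0`. -/
theorem stmt_6 (n p r n₁ n₂ n₃ : ℕ) (hn : n₁ + n₂ + n₃ = n)
    (A : Matrix (Fin n) (Fin n) ℝ) (C : Matrix (Fin p) (Fin n) ℝ)
    (K : Matrix (Fin r) (Fin n) ℝ)
    (P : Matrix (Fin n) (Fin n₁ ⊕ (Fin n₂ ⊕ Fin n₃)) ℝ)
    (hP₁ : Pᵀ * P = 1) (hP₂ : P * Pᵀ = 1)
    (A₁ : Matrix (Fin n₁) (Fin n₁) ℝ)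
    (A₂₁ : Matrix (Fin n₂) (Fin n₁) ℝ) (A₃₁ : Matrix (Fin n₃) (Fin n₁) ℝ)
    (A₂ : Matrix (Fin n₂) (Fin n₂) ℝ) (A₃₂ : Matrix (Fin n₃) (Fin n₂) ℝ)
    (A₃ : Matrix (Fin n₃) (Fin n₃) ℝ)
    (C₁ : Matrix (Fin p) (Fin n₁) ℝ)
    (K₁ : Matrix (Fin r) (Fin n₁) ℝ) (K₂ : Matrix (Fin r) (Fin n₂) ℝ)
    (K₃ : Matrix (Fin r) (Fin n₃) ℝ)
    (hA : Pᵀ * A * P =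
      Matrix.fromBlocks A₁ 0 (Matrix.fromRows A₂₁ A₃₁) (Matrix.fromBlocks A₂ 0 A₃₂ A₃))
    (hC : C * P = Matrix.fromCols C₁ 0)
    (hK : K * P = Matrix.fromCols K₁ (Matrix.fromCols K₂ K₃))
    (hobs : ∀ v : Fin n₁ → ℝ, (∀ j : ℕ, j < n₁ → (C₁ * A₁ ^ j).mulVec v = 0) → v = 0)
    (hA₂ : ∀ μ ∈ spectrum ℂ (A₂.map Complex.ofReal), μ.re < 0)
    (hA₃ : ∀ μ ∈ spectrum ℂ (A₃.map Complex.ofReal), 0 ≤ μ.re) :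
    (∀ lam : ℂ, 0 ≤ lam.re →
        (Matrix.fromRows (Dstack n A C lam) (K.map Complex.ofReal)).rank =
          (Dstack n A C lam).rank) ↔ K₃ = 0 := by
  have hn1 : n₁ ≤ n := by omega
  have hn3 : n₃ ≤ n := by omega
  -- complexified matrices
  have hPcT : (P.map Complex.ofReal)ᵀ * (P.map Complex.ofReal) = 1 := by
    rw [← myMapT, ← myMapMul, hP₁, myMapOne]
  have hPcPcT : (P.map Complex.ofReal) * (P.map Complex.ofReal)ᵀ = 1 := by
    rw [← myMapT, ← myMapMul, hP₂, myMapOne]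
  -- the transformed matrix
  have hAc : (P.map Complex.ofReal)ᵀ * (A.map Complex.ofReal) * (P.map Complex.ofReal)
      = fromBlocks (A₁.map Complex.ofReal) 0
          (fromRows (A₂₁.map Complex.ofReal) (A₃₁.map Complex.ofReal))
          (fromBlocks (A₂.map Complex.ofReal) 0
            (A₃₂.map Complex.ofReal) (A₃.map Complex.ofReal)) := by
    rw [← myMapT, ← myMapMul, ← myMapMul, hA, Matrix.fromBlocks_map, myMapFromRows,
      Matrix.fromBlocks_map, myMapZero, myMapZero]
  have hAc2 : (A.map Complex.ofReal)
      = (P.map Complex.ofReal) *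
        (fromBlocks (A₁.map Complex.ofReal) 0
          (fromRows (A₂₁.map Complex.ofReal) (A₃₁.map Complex.ofReal))
          (fromBlocks (A₂.map Complex.ofReal) 0
            (A₃₂.map Complex.ofReal) (A₃.map Complex.ofReal))) * (P.map Complex.ofReal)ᵀ := by
    rw [← hAc]
    calc (A.map Complex.ofReal)
        = 1 * (A.map Complex.ofReal) * 1 := by rw [Matrix.one_mul, Matrix.mul_one]
      _ = ((P.map Complex.ofReal) * (P.map Complex.ofReal)ᵀ) * (A.map Complex.ofReal) *
          ((P.map Complex.ofReal) * (P.map Complex.ofReal)ᵀ) := by rw [hPcPcT]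
      _ = _ := by simp only [Matrix.mul_assoc]
  -- conjugation for λ•1 - A
  have hSconj : ∀ lam : ℂ,
      lam • (1 : Matrix (Fin n) (Fin n) ℂ) - A.map Complex.ofReal
        = (P.map Complex.ofReal) *
          (lam • (1 : Matrix (Fin n₁ ⊕ (Fin n₂ ⊕ Fin n₃)) (Fin n₁ ⊕ (Fin n₂ ⊕ Fin n₃)) ℂ) -
            fromBlocks (A₁.map Complex.ofReal) 0
              (fromRows (A₂₁.map Complex.ofReal) (A₃₁.map Complex.ofReal))
              (fromBlocks (A₂.map Complex.ofReal) 0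
                (A₃₂.map Complex.ofReal) (A₃.map Complex.ofReal))) * (P.map Complex.ofReal)ᵀ := by
    intro lam
    rw [Matrix.mul_sub, Matrix.sub_mul, ← hAc2]
    congr 1
    rw [Matrix.mul_smul, Matrix.mul_one, Matrix.smul_mul, hPcPcT]
  have hSpow : ∀ (lam : ℂ) (k : ℕ),
      (lam • (1 : Matrix (Fin n) (Fin n) ℂ) - A.map Complex.ofReal) ^ k
        = (P.map Complex.ofReal) *
          (lam • (1 : Matrix (Fin n₁ ⊕ (Fin n₂ ⊕ Fin n₃)) (Fin n₁ ⊕ (Fin n₂ ⊕ Fin n₃)) ℂ) -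
            fromBlocks (A₁.map Complex.ofReal) 0
              (fromRows (A₂₁.map Complex.ofReal) (A₃₁.map Complex.ofReal))
              (fromBlocks (A₂.map Complex.ofReal) 0
                (A₃₂.map Complex.ofReal) (A₃.map Complex.ofReal))) ^ k *
          (P.map Complex.ofReal)ᵀ := by
    intro lam k
    rw [hSconj]
    exact myConjPow _ _ hPcT hPcPcT k
  -- block structure of λ•1 - Ã
  have hStblocks : ∀ lam : ℂ,
      lam • (1 : Matrix (Fin n₁ ⊕ (Fin n₂ ⊕ Fin n₃)) (Fin n₁ ⊕ (Fin n₂ ⊕ Fin n₃)) ℂ) -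
        fromBlocks (A₁.map Complex.ofReal) 0
          (fromRows (A₂₁.map Complex.ofReal) (A₃₁.map Complex.ofReal))
          (fromBlocks (A₂.map Complex.ofReal) 0
            (A₃₂.map Complex.ofReal) (A₃.map Complex.ofReal))
      = fromBlocks (lam • 1 - A₁.map Complex.ofReal) 0
          (0 - fromRows (A₂₁.map Complex.ofReal) (A₃₁.map Complex.ofReal))
          (lam • 1 - fromBlocks (A₂.map Complex.ofReal) 0
            (A₃₂.map Complex.ofReal) (A₃.map Complex.ofReal)) := by
    intro lam
    rw [mySmulOneBlocks, myFromBlocksSub]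
    congr 1
    rw [sub_zero]
  have hS23blocks : ∀ lam : ℂ,
      lam • (1 : Matrix (Fin n₂ ⊕ Fin n₃) (Fin n₂ ⊕ Fin n₃) ℂ) -
        fromBlocks (A₂.map Complex.ofReal) 0 (A₃₂.map Complex.ofReal) (A₃.map Complex.ofReal)
      = fromBlocks (lam • 1 - A₂.map Complex.ofReal) 0
          (0 - A₃₂.map Complex.ofReal) (lam • 1 - A₃.map Complex.ofReal) := by
    intro lam
    rw [mySmulOneBlocks, myFromBlocksSub]
    congr 1
    rw [sub_zero]
  have hStpow : ∀ (lam : ℂ) (k : ℕ), ∃ W,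
      (lam • (1 : Matrix (Fin n₁ ⊕ (Fin n₂ ⊕ Fin n₃)) (Fin n₁ ⊕ (Fin n₂ ⊕ Fin n₃)) ℂ) -
        fromBlocks (A₁.map Complex.ofReal) 0
          (fromRows (A₂₁.map Complex.ofReal) (A₃₁.map Complex.ofReal))
          (fromBlocks (A₂.map Complex.ofReal) 0
            (A₃₂.map Complex.ofReal) (A₃.map Complex.ofReal))) ^ k
      = fromBlocks ((lam • 1 - A₁.map Complex.ofReal) ^ k) 0 W
          ((lam • (1 : Matrix (Fin n₂ ⊕ Fin n₃) (Fin n₂ ⊕ Fin n₃) ℂ) -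
            fromBlocks (A₂.map Complex.ofReal) 0
              (A₃₂.map Complex.ofReal) (A₃.map Complex.ofReal)) ^ k) := by
    intro lam k
    rw [hStblocks]
    exact myBlockPow _ _ _ k
  have hS23pow : ∀ (lam : ℂ) (k : ℕ), ∃ W,
      (lam • (1 : Matrix (Fin n₂ ⊕ Fin n₃) (Fin n₂ ⊕ Fin n₃) ℂ) -
        fromBlocks (A₂.map Complex.ofReal) 0
          (A₃₂.map Complex.ofReal) (A₃.map Complex.ofReal)) ^ k
      = fromBlocks ((lam • 1 - A₂.map Complex.ofReal) ^ k) 0 W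
          ((lam • 1 - A₃.map Complex.ofReal) ^ k) := by
    intro lam k
    rw [hS23blocks]
    exact myBlockPow _ _ _ k
  have hCP : (C.map Complex.ofReal) * (P.map Complex.ofReal)
      = fromCols (C₁.map Complex.ofReal) 0 := by
    rw [← myMapMul, hC, myMapFromColumns, myMapZero]
  have hKP : (K.map Complex.ofReal) * (P.map Complex.ofReal)
      = fromCols (K₁.map Complex.ofReal)
          (fromCols (K₂.map Complex.ofReal) (K₃.map Complex.ofReal)) := by
    rw [← myMapMul, hK, myMapFromColumns, myMapFromColumns]
  -- kernel characterization of Dstack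
  have hD : ∀ (lam : ℂ) (v : Fin n → ℂ), Dstack n A C lam *ᵥ v = 0 ↔
      ((∀ j : ℕ, j < n → ((C.map Complex.ofReal) *
          (lam • (1 : Matrix (Fin n) (Fin n) ℂ) - A.map Complex.ofReal) ^ j) *ᵥ v = 0) ∧
        ((lam • (1 : Matrix (Fin n) (Fin n) ℂ) - A.map Complex.ofReal) ^ n) *ᵥ v = 0) := by
    intro lam v
    rw [Dstack, fromRows_mulVec]
    constructor
    · intro h
      constructor
      · intro j hj
        funext i
        have := congrFun h (Sum.inl (⟨j, hj⟩, i))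
        simpa [Matrix.mulVec, dotProduct] using this
      · funext i
        have := congrFun h (Sum.inr i)
        simpa using this
    · rintro ⟨h1, h2⟩
      funext x
      cases x with
      | inl ki =>
        have := congrFun (h1 (ki.1 : ℕ) ki.1.isLt) ki.2
        simpa [Matrix.mulVec, dotProduct] using this
      | inr i =>
        have := congrFun h2 i
        simpa using this
  constructor
  · -- rank condition → K₃ = 0
    intro hrank
    have hfin : Module.finrank ℂ (Fin n₃ → ℂ) = n₃ := by
      simp [Module.finrank_pi]
    set f : Module.End ℂ (Fin n₃ → ℂ) := Matrix.mulVecLin (A₃.map Complex.ofReal) with hf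
    have hpowapp : ∀ (μ : ℂ) (k : ℕ) (u : Fin n₃ → ℂ),
        ((f - μ • 1) ^ k) u = ((A₃.map Complex.ofReal - μ • 1) ^ k) *ᵥ u := by
      intro μ k
      induction k with
      | zero => intro u; simp
      | succ k ih =>
        intro u
        rw [pow_succ', pow_succ', Module.End.mul_apply, ih, ← Matrix.mulVec_mulVec,
          Matrix.sub_mulVec, Matrix.smul_mulVec, Matrix.one_mulVec]
        simp [hf]
    have hker : ∀ μ : ℂ, f.maxGenEigenspace μ
        ≤ LinearMap.ker (Matrix.mulVecLin (K₃.map Complex.ofReal)) := by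
      intro μ u hu
      rw [Module.End.maxGenEigenspace_eq_genEigenspace_finrank,
        Module.End.mem_genEigenspace_nat, LinearMap.mem_ker, hpowapp] at hu
      rw [hfin] at hu
      by_cases hu0 : u = 0
      · simp [hu0]
      have hMn : ((A₃.map Complex.ofReal - μ • 1) ^ n) *ᵥ u = 0 := by
        rw [show n = (n - n₃) + n₃ by omega, pow_add, ← Matrix.mulVec_mulVec, hu,
          Matrix.mulVec_zero]
      have hS3n : ((μ • (1 : Matrix (Fin n₃) (Fin n₃) ℂ) - A₃.map Complex.ofReal) ^ n) *ᵥ u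
          = 0 := by
        rw [show μ • (1 : Matrix (Fin n₃) (Fin n₃) ℂ) - A₃.map Complex.ofReal
            = -(A₃.map Complex.ofReal - μ • 1) from (neg_sub _ _).symm]
        exact myNegPowVec _ _ _ hMn
      have hS3d : ((μ • (1 : Matrix (Fin n₃) (Fin n₃) ℂ) - A₃.map Complex.ofReal) ^ n₃) *ᵥ u
          = 0 := by
        rw [show μ • (1 : Matrix (Fin n₃) (Fin n₃) ℂ) - A₃.map Complex.ofReal
            = -(A₃.map Complex.ofReal - μ • 1) from (neg_sub _ _).symm]
        exact myNegPowVec _ _ _ hu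
      have hμ : μ ∈ spectrum ℂ (A₃.map Complex.ofReal) :=
        mySpectrumMem _ μ n₃ u hu0 hS3d
      have hre := hA₃ μ hμ
      -- build the test vector
      set w : (Fin n₁ ⊕ (Fin n₂ ⊕ Fin n₃)) → ℂ := Sum.elim 0 (Sum.elim 0 u) with hwdef
      set v : Fin n → ℂ := (P.map Complex.ofReal) *ᵥ w with hvdef
      have hPtv : (P.map Complex.ofReal)ᵀ *ᵥ v = w := by
        rw [hvdef, Matrix.mulVec_mulVec, hPcT, Matrix.one_mulVec]
      have hStw : ∀ k : ℕ,
          ((μ • (1 : Matrix (Fin n₁ ⊕ (Fin n₂ ⊕ Fin n₃)) (Fin n₁ ⊕ (Fin n₂ ⊕ Fin n₃)) ℂ) -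
            fromBlocks (A₁.map Complex.ofReal) 0
              (fromRows (A₂₁.map Complex.ofReal) (A₃₁.map Complex.ofReal))
              (fromBlocks (A₂.map Complex.ofReal) 0
                (A₃₂.map Complex.ofReal) (A₃.map Complex.ofReal))) ^ k) *ᵥ w
          = Sum.elim (0 : Fin n₁ → ℂ) (Sum.elim (0 : Fin n₂ → ℂ)
              (((μ • 1 - A₃.map Complex.ofReal) ^ k) *ᵥ u)) := by
        intro k
        obtain ⟨W, hW⟩ := hStpow μ k
        obtain ⟨W', hW'⟩ := hS23pow μ k
        rw [hW, hwdef, Matrix.fromBlocks_mulVec, hW', Matrix.fromBlocks_mulVec]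
        funext x
        rcases x with x | x | x <;>
          simp [Matrix.mulVec_zero, Matrix.zero_mulVec]
      have hDv : Dstack n A C μ *ᵥ v = 0 := by
        rw [hD μ v]
        have hz23 : Sum.elim (0 : Fin n₂ → ℂ) (0 : Fin n₃ → ℂ) = 0 := by
          funext x; cases x <;> rfl
        have hz123 : Sum.elim (0 : Fin n₁ → ℂ) (0 : Fin n₂ ⊕ Fin n₃ → ℂ) = 0 := by
          funext x; cases x <;> rfl
        constructor
        · intro j hj
          rw [hSpow]
          simp only [← Matrix.mul_assoc]
          rw [← Matrix.mulVec_mulVec, ← Matrix.mulVec_mulVec, hPtv, hStw j, hCP,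
            fromCols_mulVec_sumElim]
          rw [Matrix.mulVec_zero, Matrix.zero_mulVec, add_zero]
        · rw [hSpow]
          rw [← Matrix.mulVec_mulVec, ← Matrix.mulVec_mulVec, hPtv, hStw n, hS3n, hz23, hz123,
            Matrix.mulVec_zero]
      have hKv := (myRankIff _ _).1 (hrank μ hre) v hDv
      have hK3u : (K₃.map Complex.ofReal) *ᵥ u = 0 := by
        have e2 : (K.map Complex.ofReal) *ᵥ v = ((K.map Complex.ofReal) * (P.map Complex.ofReal)) *ᵥ w := by
          rw [hvdef, Matrix.mulVec_mulVec]
        rw [e2, hKP, hwdef, fromCols_mulVec_sumElim, fromCols_mulVec_sumElim] at hKv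
        simpa [Matrix.mulVec_zero] using hKv
      simpa [LinearMap.mem_ker, Matrix.mulVecLin_apply] using hK3u
    have htop := Module.End.iSup_maxGenEigenspace_eq_top f
    have hall : ∀ u : Fin n₃ → ℂ, (K₃.map Complex.ofReal) *ᵥ u = 0 := by
      intro u
      have hu : u ∈ LinearMap.ker (Matrix.mulVecLin (K₃.map Complex.ofReal)) := by
        have h1 : u ∈ (⊤ : Submodule ℂ (Fin n₃ → ℂ)) := trivial
        rw [← htop] at h1
        exact (iSup_le hker) h1
      simpa [LinearMap.mem_ker, Matrix.mulVecLin_apply] using hu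
    ext i j
    have h0 := congrFun (hall (Pi.single j 1)) i
    simp only [Matrix.mulVec_single, MulOpposite.op_one, Pi.smul_apply, smul_eq_mul, one_mul, one_smul, Matrix.col_apply, Matrix.map_apply, mul_one, Pi.zero_apply] at h0
    exact_mod_cast h0
  · -- K₃ = 0 → rank condition
    intro hK3 lam hre
    apply (myRankIff _ _).2
    intro v hv
    rw [hD lam v] at hv
    obtain ⟨h1, h2⟩ := hv
    set w : (Fin n₁ ⊕ (Fin n₂ ⊕ Fin n₃)) → ℂ := (P.map Complex.ofReal)ᵀ *ᵥ v with hwdef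
    have hvw : v = (P.map Complex.ofReal) *ᵥ w := by
      rw [hwdef, Matrix.mulVec_mulVec, hPcPcT, Matrix.one_mulVec]
    set w1 : Fin n₁ → ℂ := fun x => w (Sum.inl x) with hw1def
    set w2 : Fin n₂ → ℂ := fun x => w (Sum.inr (Sum.inl x)) with hw2def
    set w3 : Fin n₃ → ℂ := fun x => w (Sum.inr (Sum.inr x)) with hw3def
    have hwelim : w = Sum.elim w1 (Sum.elim w2 w3) := by
      funext x
      rcases x with x | x | x <;> rfl
    have hC1 : ∀ j : ℕ, j < n →
        ((C₁.map Complex.ofReal) * (lam • 1 - A₁.map Complex.ofReal) ^ j) *ᵥ w1 = 0 := by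
      intro j hj
      have h0 := h1 j hj
      obtain ⟨W, hW⟩ := hStpow lam j
      rw [hSpow] at h0
      simp only [← Matrix.mul_assoc] at h0
      rw [← Matrix.mulVec_mulVec, ← Matrix.mulVec_mulVec, ← hwdef, hwelim, hW,
        Matrix.fromBlocks_mulVec, hCP, fromCols_mulVec_sumElim] at h0
      simpa [Matrix.mulVec_mulVec, Matrix.zero_mulVec, Matrix.mulVec_zero] using h0
    have hbin : ∀ j : ℕ, j < n₁ →
        ((C₁.map Complex.ofReal) * (A₁.map Complex.ofReal) ^ j) *ᵥ w1 = 0 := by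
      intro j hj
      exact myBinom _ _ lam w1 j (fun i hi => hC1 i (lt_of_le_of_lt hi (lt_of_lt_of_le hj hn1)))
    have hw1 : w1 = 0 := by
      have hrealim : ∀ j : ℕ, j < n₁ →
          (C₁ * A₁ ^ j) *ᵥ (fun x => (w1 x).re) = 0 ∧
          (C₁ * A₁ ^ j) *ᵥ (fun x => (w1 x).im) = 0 := by
        intro j hj
        apply myReIm
        rw [myMapMul, myMapPow]
        exact hbin j hj
      have hr := hobs (fun x => (w1 x).re) (fun j hj => (hrealim j hj).1)
      have hi := hobs (fun x => (w1 x).im) (fun j hj => (hrealim j hj).2)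
      funext x
      have hrx := congrFun hr x
      have hix := congrFun hi x
      simp only [Pi.zero_apply] at hrx hix ⊢
      exact Complex.ext hrx hix
    have hSt_n : ((lam • (1 : Matrix (Fin n₁ ⊕ (Fin n₂ ⊕ Fin n₃)) (Fin n₁ ⊕ (Fin n₂ ⊕ Fin n₃)) ℂ) -
        fromBlocks (A₁.map Complex.ofReal) 0
          (fromRows (A₂₁.map Complex.ofReal) (A₃₁.map Complex.ofReal))
          (fromBlocks (A₂.map Complex.ofReal) 0
            (A₃₂.map Complex.ofReal) (A₃.map Complex.ofReal))) ^ n) *ᵥ w = 0 := by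
      rw [hwdef, Matrix.mulVec_mulVec]
      have e1 : (lam • (1 : Matrix (Fin n₁ ⊕ (Fin n₂ ⊕ Fin n₃)) (Fin n₁ ⊕ (Fin n₂ ⊕ Fin n₃)) ℂ) -
          fromBlocks (A₁.map Complex.ofReal) 0
            (fromRows (A₂₁.map Complex.ofReal) (A₃₁.map Complex.ofReal))
            (fromBlocks (A₂.map Complex.ofReal) 0
              (A₃₂.map Complex.ofReal) (A₃.map Complex.ofReal))) ^ n * (P.map Complex.ofReal)ᵀ
          = (P.map Complex.ofReal)ᵀ *
            ((lam • (1 : Matrix (Fin n) (Fin n) ℂ) - A.map Complex.ofReal) ^ n) := by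
        rw [hSpow]
        simp only [← Matrix.mul_assoc]
        rw [hPcT, Matrix.one_mul]
      rw [e1, ← Matrix.mulVec_mulVec, h2, Matrix.mulVec_zero]
    have hw2 : w2 = 0 := by
      obtain ⟨W, hW⟩ := hStpow lam n
      obtain ⟨W', hW'⟩ := hS23pow lam n
      rw [hW, hwelim, Matrix.fromBlocks_mulVec, hW', Matrix.fromBlocks_mulVec] at hSt_n
      have hcomp : ((lam • 1 - A₂.map Complex.ofReal) ^ n) *ᵥ w2 = 0 := by
        funext i
        have h3 := congrFun hSt_n (Sum.inr (Sum.inl i))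
        simpa [hw1, Matrix.mulVec_zero, Matrix.zero_mulVec] using h3
      have hnotmem : lam ∉ spectrum ℂ (A₂.map Complex.ofReal) :=
        fun hmem => absurd hre (not_le.mpr (hA₂ lam hmem))
      have hunit : IsUnit (lam • (1 : Matrix (Fin n₂) (Fin n₂) ℂ) - A₂.map Complex.ofReal) := by
        have := (spectrum.notMem_iff).mp hnotmem
        rwa [Algebra.algebraMap_eq_smul_one] at this
      exact myUnitKill _ hunit n w2 hcomp
    rw [hvw, Matrix.mulVec_mulVec, hKP, hwelim, fromCols_mulVec_sumElim,
      fromCols_mulVec_sumElim, hw1, hw2, hK3, myMapZero]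
    simp
end

section
/- Let A₁ ∈ ℝ^{n₁×n₁} and C₁ ∈ ℝ^{p×n₁} be such that the pair (A₁, C₁) is observable. Then for every integer k ≥ 1 and every λ ∈ ℂ, the complex matrix D_{[A₁,C₁],k,λ} obtained by vertically stacking C₁, C₁(λI−A₁), …, C₁(λI−A₁)^{k−1}, and (λI−A₁)^k has rank n₁ (full column rank); equivalently, the only v ∈ ℂ^{n₁} with C₁(λI−A₁)^j v = 0 for all j = 0,…,k−1 and (λI−A₁)^k v = 0 is v = 0. -/
open Matrix

/-- If the pair `(A₁, C₁)` is observable, then for every integer `k ≥ 1`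
and every `λ ∈ ℂ`, the stacked matrix `D_{[A₁,C₁],k,λ}` has full column rank `n₁`. -/
theorem stmt_7 (n₁ p : ℕ) (A₁ : Matrix (Fin n₁) (Fin n₁) ℝ) (C₁ : Matrix (Fin p) (Fin n₁) ℝ)
    (hobs : ∀ v : Fin n₁ → ℝ, (∀ j : ℕ, j < n₁ → (C₁ * A₁ ^ j).mulVec v = 0) → v = 0) :
    ∀ k : ℕ, 1 ≤ k → ∀ lam : ℂ, (Dstack k A₁ C₁ lam).rank = n₁ := by
  intro k hk lam
  set Aℂ : Matrix (Fin n₁) (Fin n₁) ℂ := A₁.map Complex.ofReal with hAC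
  set Cℂ : Matrix (Fin p) (Fin n₁) ℂ := C₁.map Complex.ofReal with hCC
  set M : Matrix (Fin n₁) (Fin n₁) ℂ := lam • 1 - Aℂ with hM
  -- kernel is trivial
  have hker : ∀ v : Fin n₁ → ℂ, (Dstack k A₁ C₁ lam).mulVec v = 0 → v = 0 := by
    intro v hv
    rw [Dstack, fromRows_mulVec] at hv
    have htop : ∀ j : ℕ, j < k → (Cℂ * M ^ j) *ᵥ v = 0 := by
      intro j hj
      ext i
      have := congrFun hv (Sum.inl (⟨j, hj⟩, i))
      simpa [mulVec, dotProduct] using this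
    have hbot : (M ^ k) *ᵥ v = 0 := by
      ext i
      have := congrFun hv (Sum.inr i)
      simpa using this
    -- C M^m v = 0 for all m
    have hCM : ∀ m : ℕ, (Cℂ * M ^ m) *ᵥ v = 0 := by
      intro m
      rcases lt_or_ge m k with h | h
      · exact htop m h
      · obtain ⟨d, rfl⟩ := Nat.exists_eq_add_of_le h
        rw [add_comm k d, pow_add, ← Matrix.mul_assoc, ← mulVec_mulVec, hbot, mulVec_zero]
    -- C M^m A^j v = 0 for all j, m
    have key : ∀ j m : ℕ, (Cℂ * M ^ m) *ᵥ (Aℂ ^ j *ᵥ v) = 0 := by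
      intro j
      induction j with
      | zero => simpa using hCM
      | succ j ih =>
        intro m
        have h1 : Aℂ ^ (j+1) *ᵥ v = Aℂ *ᵥ (Aℂ ^ j *ᵥ v) := by
          rw [mulVec_mulVec, ← pow_succ']
        rw [h1, mulVec_mulVec]
        have h2 : Cℂ * M ^ m * Aℂ = lam • (Cℂ * M ^ m) - Cℂ * M ^ (m+1) := by
          have : Aℂ = lam • 1 - M := (sub_sub_cancel _ _).symm
          rw [this]
          rw [Matrix.mul_sub, Matrix.mul_smul, Matrix.mul_one, pow_succ, Matrix.mul_assoc]
        rw [h2, Matrix.sub_mulVec, Matrix.smul_mulVec, ih m, ih (m+1), smul_zero,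
          sub_zero]
    have hCA : ∀ j : ℕ, (Cℂ * Aℂ ^ j) *ᵥ v = 0 := by
      intro j
      have := key j 0
      simpa [mulVec_mulVec] using this
    -- split into real and imaginary parts
    have hreal : ∀ w : Fin n₁ → ℝ, (∀ i, (v i).re = w i ∨ True) → True := fun _ _ => trivial
    have hcoe : ∀ j : ℕ, (C₁ * A₁ ^ j).map Complex.ofReal = Cℂ * Aℂ ^ j := by
      intro j
      have h2 : (A₁ ^ j).map Complex.ofRealHom = Aℂ ^ j := by
        have := map_pow (Complex.ofRealHom.mapMatrix (m := Fin n₁)) A₁ j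
        simp only [RingHom.mapMatrix_apply] at this
        exact this
      show (C₁ * A₁ ^ j).map (⇑Complex.ofRealHom) = C₁.map (⇑Complex.ofRealHom) * Aℂ ^ j
      rw [Matrix.map_mul, h2]
    have hre : (fun i => (v i).re) = 0 ∧ (fun i => (v i).im) = 0 := by
      constructor
      all_goals {
        apply hobs
        intro j hj
        ext i
        have h0 := congrFun (hCA j) i
        rw [← hcoe j] at h0
        have : ((C₁ * A₁ ^ j).map Complex.ofReal *ᵥ v) i
            = ∑ l, ((C₁ * A₁ ^ j) i l : ℂ) * v l := by
          simp [mulVec, dotProduct]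
        rw [this] at h0
        first
        | ( have := congrArg Complex.re h0
            simpa [mulVec, dotProduct, Complex.re_sum] using this )
        | ( have := congrArg Complex.im h0
            simpa [mulVec, dotProduct, Complex.im_sum] using this )
      }
    ext i
    have h1 := congrFun hre.1 i
    have h2 := congrFun hre.2 i
    exact Complex.ext (by simpa using h1) (by simpa using h2)
  -- conclude rank
  have hkerbot : LinearMap.ker (Dstack k A₁ C₁ lam).mulVecLin = ⊥ :=
    LinearMap.ker_eq_bot'.mpr fun v hv => hker v hv
  have := LinearMap.finrank_range_add_finrank_ker (Dstack k A₁ C₁ lam).mulVecLin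
  rw [hkerbot, finrank_bot, add_zero] at this
  rw [Matrix.rank, this]
  simp
end
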